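/- arXiv:1706.05716 — 4 statements merged into one kernel-verified Lean document; each statement's English description precedes it below -/
import Mathlib

section
/- For u < v and an α-regular Volterra kernel K with 0 < α < 1/2 satisfying |∂K/∂u(u,r)| ≤ C(u−r)^{α−1} on {r < u}, the function φ(u,v) = ∫_{−∞}^{u∧v} ∂K/∂u(u,r) · ∂K/∂v(v,r) dr satisfies |φ(u,v)| ≤ C' |u−v|^{2α−1} for some constant C' depending only on C and α. -/
open MeasureTheory Real

/-- If `K'` (the partial derivative `∂K/∂u`) of an `α`-regular Volterra
kernel satisfies `|K' u r| ≤ C (u-r)^(α-1)` for `r < u`, then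
`φ(u,v) = ∫_{-∞}^{u ∧ v} K'(u,r) K'(v,r) dr` satisfies
`|φ(u,v)| ≤ C' |u-v|^(2α-1)` for `u < v`, with `C'` depending only on `C` and `α`. -/
theorem stmt0 :
    ∀ (α C : ℝ), 0 < α → α < 1/2 → 0 < C →
    ∃ C' : ℝ, 0 < C' ∧
      ∀ (K' : ℝ → ℝ → ℝ),
        (∀ u r : ℝ, r < u → |K' u r| ≤ C * (u - r) ^ (α - 1)) →
        ∀ u v : ℝ, u < v →
          |∫ r in Set.Iio (min u v), K' u r * K' v r| ≤ C' * |u - v| ^ (2 * α - 1) := by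
  intro α C hα hα2 hC
  refine ⟨C ^ 2 * (1 / (1 - 2 * α) + 1 / α), by
    have h1 : (0:ℝ) < 1 - 2 * α := by linarith
    positivity, ?_⟩
  intro K' hK u v huv
  have hmin : min u v = u := min_eq_left huv.le
  rw [hmin]
  set d : ℝ := v - u with hd_def
  have hd : 0 < d := by simp [hd_def]; linarith
  set m : ℝ := 2 * u - v with hm_def
  have hmu : m < u := by simp [hm_def]; linarith
  have habs : |u - v| = d := by rw [abs_of_nonpos (by linarith)]; ring
  -- the dominating function
  set h : ℝ → ℝ := fun r => if r < m then C ^ 2 * (u - r) ^ (2 * α - 2)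
    else C ^ 2 * (d ^ (α - 1) * (u - r) ^ (α - 1)) with hh_def
  -- substitution machinery
  have hmp := MeasureTheory.Measure.measurePreserving_sub_left (volume : Measure ℝ) u
  have hemb := (MeasurableEquiv.subLeft u).measurableEmbedding
  have hsub : ∀ (g : ℝ → ℝ) (s : Set ℝ),
      ∫ x in (fun t => u - t) ⁻¹' s, g (u - x) = ∫ x in s, g x := fun g s =>
    hmp.setIntegral_preimage_emb hemb g s
  -- preimage identities
  have hpre1 : (fun t => u - t) ⁻¹' Set.Ioi d = Set.Iio m := by
    ext x; simp [Set.mem_preimage, hm_def, hd_def]; constructor <;> intro hx <;> linarith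
  have hpre2 : (fun t => u - t) ⁻¹' Set.Ioc 0 d = Set.Ico m u := by
    ext x
    simp only [Set.mem_preimage, Set.mem_Ioc, Set.mem_Ico, hm_def, hd_def]
    constructor <;> rintro ⟨h1, h2⟩ <;> constructor <;> linarith
  -- integrability and value of piece 1
  have h2a : (2 : ℝ) * α - 2 < -1 := by linarith
  have hint1 : IntegrableOn (fun r => (u - r) ^ (2 * α - 2)) (Set.Iio m) := by
    have := (hmp.integrableOn_comp_preimage hemb
      (f := fun s : ℝ => s ^ (2 * α - 2)) (s := Set.Ioi d)).2 (integrableOn_Ioi_rpow_of_lt h2a hd)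
    simpa [hpre1, Function.comp_def] using this
  have hval1 : ∫ r in Set.Iio m, (u - r) ^ (2 * α - 2) = d ^ (2 * α - 1) / (1 - 2 * α) := by
    have := hsub (fun s => s ^ (2 * α - 2)) (Set.Ioi d)
    rw [hpre1] at this
    rw [this, integral_Ioi_rpow_of_lt h2a hd]
    have : (2 : ℝ) * α - 2 + 1 = 2 * α - 1 := by ring
    rw [this]
    have h1 : (2:ℝ) * α - 1 ≠ 0 := by intro hz; nlinarith
    have h2 : (1:ℝ) - 2 * α ≠ 0 := by intro hz; nlinarith
    field_simp
    ring
  -- integrability and value of piece 2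
  have hrint : IntervalIntegrable (fun s : ℝ => s ^ (α - 1)) volume 0 d :=
    intervalIntegral.intervalIntegrable_rpow' (by linarith)
  have hioc : IntegrableOn (fun s : ℝ => s ^ (α - 1)) (Set.Ioc 0 d) := hrint.1
  have hint2 : IntegrableOn (fun r => (u - r) ^ (α - 1)) (Set.Ico m u) := by
    have := (hmp.integrableOn_comp_preimage hemb
      (f := fun s : ℝ => s ^ (α - 1)) (s := Set.Ioc 0 d)).2 hioc
    simpa [hpre2, Function.comp_def] using this
  have hval2 : ∫ r in Set.Ico m u, (u - r) ^ (α - 1) = d ^ α / α := by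
    have := hsub (fun s => s ^ (α - 1)) (Set.Ioc 0 d)
    rw [hpre2] at this
    rw [this, ← intervalIntegral.integral_of_le hd.le,
      integral_rpow (Or.inl (by linarith : (-1:ℝ) < α - 1))]
    rw [show α - 1 + 1 = α by ring, Real.zero_rpow (by linarith)]
    ring
  -- h is integrable on Iio u and its integral equals the claimed bound
  have hdisj : Disjoint (Set.Iio m) (Set.Ico m u) := by
    rw [Set.disjoint_left]; intro x hx hx'; exact absurd hx'.1 (not_le.2 hx)
  have hunion : Set.Iio m ∪ Set.Ico m u = Set.Iio u := Set.Iio_union_Ico_eq_Iio hmu.le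
  have hcong1 : Set.EqOn h (fun r => C ^ 2 * (u - r) ^ (2 * α - 2)) (Set.Iio m) := by
    intro r hr; simp only [hh_def, if_pos (Set.mem_Iio.1 hr)]
  have hcong2 : Set.EqOn h (fun r => C ^ 2 * (d ^ (α - 1) * (u - r) ^ (α - 1))) (Set.Ico m u) := by
    intro r hr; simp only [hh_def, if_neg (not_lt.2 hr.1)]
  have hint_h1 : IntegrableOn h (Set.Iio m) :=
    MeasureTheory.IntegrableOn.congr_fun (hint1.const_mul (C ^ 2))
      (fun r hr => (hcong1 hr).symm) measurableSet_Iio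
  have hint_h2 : IntegrableOn h (Set.Ico m u) :=
    MeasureTheory.IntegrableOn.congr_fun ((hint2.const_mul (d ^ (α - 1))).const_mul (C ^ 2))
      (fun r hr => by rw [hcong2 hr]) measurableSet_Ico
  have hint_h : IntegrableOn h (Set.Iio u) := by
    rw [← hunion]; exact hint_h1.union hint_h2
  have hval_h : ∫ r in Set.Iio u, h r
      = C ^ 2 * (1 / (1 - 2 * α) + 1 / α) * d ^ (2 * α - 1) := by
    rw [← hunion, setIntegral_union hdisj measurableSet_Ico hint_h1 hint_h2,
      setIntegral_congr_fun measurableSet_Iio hcong1,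
      setIntegral_congr_fun measurableSet_Ico hcong2,
      integral_const_mul, integral_const_mul, integral_const_mul, hval1, hval2]
    have hdd : d ^ (α - 1) * (d ^ α / α) = d ^ (2 * α - 1) / α := by
      rw [div_eq_mul_inv, ← mul_assoc, ← Real.rpow_add hd, show α - 1 + α = 2 * α - 1 by ring,
        div_eq_mul_inv]
    rw [hdd]
    field_simp
  -- pointwise a.e. bound
  have hbound : ∀ r ∈ Set.Iio u, ‖K' u r * K' v r‖ ≤ h r := by
    intro r hr
    rw [Set.mem_Iio] at hr
    have hur : (0 : ℝ) < u - r := by linarith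
    have hvr : (0 : ℝ) < v - r := by linarith
    have h1 := hK u r hr
    have h2 := hK v r (hr.trans huv)
    have hprod : ‖K' u r * K' v r‖ ≤ C ^ 2 * ((u - r) ^ (α - 1) * (v - r) ^ (α - 1)) := by
      rw [Real.norm_eq_abs, abs_mul]
      calc |K' u r| * |K' v r| ≤ (C * (u - r) ^ (α - 1)) * (C * (v - r) ^ (α - 1)) := by
            apply mul_le_mul h1 h2 (abs_nonneg _) (by positivity)
        _ = C ^ 2 * ((u - r) ^ (α - 1) * (v - r) ^ (α - 1)) := by ring
    by_cases hrm : r < m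
    · refine hprod.trans ?_
      rw [hh_def]
      simp only [if_pos hrm]
      have hle : (v - r) ^ (α - 1) ≤ (u - r) ^ (α - 1) :=
        Real.rpow_le_rpow_of_nonpos hur (by linarith) (by linarith)
      calc C ^ 2 * ((u - r) ^ (α - 1) * (v - r) ^ (α - 1))
          ≤ C ^ 2 * ((u - r) ^ (α - 1) * (u - r) ^ (α - 1)) := by
            apply mul_le_mul_of_nonneg_left (mul_le_mul_of_nonneg_left hle (by positivity))
              (by positivity)
        _ = C ^ 2 * (u - r) ^ (2 * α - 2) := by
            rw [← Real.rpow_add hur, show α - 1 + (α - 1) = 2 * α - 2 by ring]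
    · refine hprod.trans ?_
      rw [hh_def]
      simp only [if_neg hrm]
      have hle : (v - r) ^ (α - 1) ≤ d ^ (α - 1) :=
        Real.rpow_le_rpow_of_nonpos hd (by push_neg at hrm; simp [hd_def, hm_def] at hrm ⊢; linarith)
          (by linarith)
      have := mul_le_mul_of_nonneg_left hle (le_of_lt (Real.rpow_pos_of_pos hur (α - 1)))
      calc C ^ 2 * ((u - r) ^ (α - 1) * (v - r) ^ (α - 1))
          ≤ C ^ 2 * ((u - r) ^ (α - 1) * d ^ (α - 1)) := by
            exact mul_le_mul_of_nonneg_left this (by positivity)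
        _ = C ^ 2 * (d ^ (α - 1) * (u - r) ^ (α - 1)) := by ring
  -- conclude
  by_cases hf : Integrable (fun r => K' u r * K' v r) (volume.restrict (Set.Iio u))
  · calc |∫ r in Set.Iio u, K' u r * K' v r|
        ≤ ∫ r in Set.Iio u, ‖K' u r * K' v r‖ := by
          simpa [Real.norm_eq_abs] using
            norm_integral_le_integral_norm (μ := volume.restrict (Set.Iio u))
              (fun r => K' u r * K' v r)
      _ ≤ ∫ r in Set.Iio u, h r := by
          apply integral_mono_of_nonneg
          · filter_upwards with r using norm_nonneg _
          · exact hint_h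
          · filter_upwards [ae_restrict_mem measurableSet_Iio] with r hr using hbound r hr
      _ = C ^ 2 * (1 / (1 - 2 * α) + 1 / α) * d ^ (2 * α - 1) := hval_h
      _ = C ^ 2 * (1 / (1 - 2 * α) + 1 / α) * |u - v| ^ (2 * α - 1) := by rw [habs]
  · rw [integral_undef hf]
    have : (0 : ℝ) < |u - v| ^ (2 * α - 1) := by
      rw [habs]; exact Real.rpow_pos_of_pos hd _
    simp only [abs_zero]
    have h1 : (0:ℝ) < 1 - 2 * α := by linarith
    exact le_of_lt (mul_pos (by positivity) this)
end

section
/- Let K^H(t,r) = c_H ∫_r^t (u−r)^{H−3/2} du for r < t, with H ∈ (1/2,1). Then for all s₁ < t₁ and s₂ < t₂, ∫_ℝ (K^H(t₁,r) − K^H(s₁,r))(K^H(t₂,r) − K^H(s₂,r)) dr = H(2H−1) ∫_{s₁}^{t₁} ∫_{s₂}^{t₂} |u−v|^{2H−2} du dv, provided c_H² · B(H−1/2, 2−2H) = H(2H−1) where B is the Beta function. -/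
open MeasureTheory Real intervalIntegral

open scoped ENNReal

lemma lintegral_image_1d {s : Set ℝ} {f f' : ℝ → ℝ} (hs : MeasurableSet s)
    (hf' : ∀ x ∈ s, HasDerivWithinAt f (f' x) s x) (hf : Set.InjOn f s) (g : ℝ → ℝ≥0∞) :
    ∫⁻ x in f '' s, g x = ∫⁻ x in s, ENNReal.ofReal |f' x| * g (f x) := by
  simpa only [ContinuousLinearMap.det_toSpanSingleton] using
    lintegral_image_eq_lintegral_abs_det_fderiv_mul volume hs
      (fun x hx => (hf' x hx).hasFDerivWithinAt) hf g

lemma cpow_eq_ofReal {x y : ℝ} (hx : 0 ≤ x) : (x:ℂ) ^ ((y:ℝ):ℂ) = ((x ^ y : ℝ) : ℂ) :=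
  (Complex.ofReal_cpow hx y).symm

lemma real_beta_eq {a b : ℝ} (ha : 0 < a) (hb : 0 < b) :
    Real.Gamma a * Real.Gamma b
      = Real.Gamma (a+b) * ∫ t in (0:ℝ)..1, t ^ (a-1) * (1-t) ^ (b-1) := by
  have ha' : 0 < (a:ℂ).re := by simpa using ha
  have hb' : 0 < (b:ℂ).re := by simpa using hb
  have h := Complex.Gamma_mul_Gamma_eq_betaIntegral ha' hb'
  have hβ : Complex.betaIntegral a b
      = ((∫ t in (0:ℝ)..1, t ^ (a-1) * (1-t) ^ (b-1) : ℝ) : ℂ) := by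
    rw [Complex.betaIntegral, ← intervalIntegral.integral_ofReal]
    apply intervalIntegral.integral_congr
    intro x hx
    rw [Set.uIcc_of_le (by norm_num : (0:ℝ) ≤ 1)] at hx
    have h0 : 0 ≤ x := hx.1
    have h1 : 0 ≤ 1 - x := by linarith [hx.2]
    push_cast
    rw [← cpow_eq_ofReal h0, ← cpow_eq_ofReal h1]
    push_cast
    ring_nf
  rw [hβ, Complex.Gamma_ofReal, Complex.Gamma_ofReal, ← Complex.ofReal_add,
    Complex.Gamma_ofReal, ← Complex.ofReal_mul, ← Complex.ofReal_mul] at h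
  exact_mod_cast h

lemma beta_integrableOn {a b : ℝ} (ha : 0 < a) (hb : 0 < b) :
    IntegrableOn (fun t : ℝ => t ^ (a-1) * (1-t) ^ (b-1)) (Set.Ioc 0 1) := by
  have ha' : 0 < (a:ℂ).re := by simpa using ha
  have hb' : 0 < (b:ℂ).re := by simpa using hb
  have h := Complex.betaIntegral_convergent ha' hb'
  rw [intervalIntegrable_iff, Set.uIoc_of_le (by norm_num : (0:ℝ) ≤ 1)] at h
  have h2 := h.re
  apply h2.congr
  filter_upwards [ae_restrict_mem measurableSet_Ioc] with x hx
  have h0 : 0 ≤ x := hx.1.le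
  have h1 : 0 ≤ 1 - x := by linarith [hx.2]
  rw [show ((x:ℂ) ^ ((a:ℂ)-1) * ((1:ℂ)-x) ^ ((b:ℂ)-1))
      = ((x ^ (a-1) * (1-x) ^ (b-1) : ℝ) : ℂ) by
    push_cast
    rw [← cpow_eq_ofReal h0, ← cpow_eq_ofReal h1]; push_cast; ring_nf]
  simp

lemma betaLint {a b : ℝ} (ha : 0 < a) (hb : 0 < b) :
    ∫⁻ x in Set.Ioi (0:ℝ), ENNReal.ofReal (x ^ (a-1) * (1+x) ^ (-(a+b)))
      = ENNReal.ofReal (Real.Gamma a * Real.Gamma b / Real.Gamma (a+b)) := by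
  have hG : 0 < Real.Gamma (a+b) := Real.Gamma_pos_of_pos (by linarith)
  -- the beta integral over Ioo 0 1 as a lintegral
  have hI : ∫⁻ t in Set.Ioo (0:ℝ) 1, ENNReal.ofReal (t^(a-1)*(1-t)^(b-1))
      = ENNReal.ofReal (Real.Gamma a * Real.Gamma b / Real.Gamma (a+b)) := by
    rw [← ofReal_integral_eq_lintegral_ofReal
        ((beta_integrableOn ha hb).mono_set Set.Ioo_subset_Ioc_self)]
    · congr 1
      rw [← MeasureTheory.integral_Ioc_eq_integral_Ioo,
        ← intervalIntegral.integral_of_le (by norm_num : (0:ℝ) ≤ 1)]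
      rw [eq_div_iff hG.ne']
      rw [real_beta_eq ha hb]; ring
    · filter_upwards [ae_restrict_mem measurableSet_Ioo] with x hx
      have h0 : 0 ≤ x := hx.1.le
      have h1 : 0 ≤ 1 - x := by linarith [hx.2.le]
      positivity
  -- change of variables t = x / (1+x)
  have himg : (fun x : ℝ => x / (1+x)) '' Set.Ioi 0 = Set.Ioo 0 1 := by
    ext t
    constructor
    · rintro ⟨x, hx, rfl⟩
      have hx' : (0:ℝ) < x := hx
      have hd : (0:ℝ) < 1 + x := by linarith
      exact ⟨div_pos hx' hd, by rw [div_lt_one hd]; linarith⟩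
    · rintro ⟨ht0, ht1⟩
      have h1t : (0:ℝ) < 1 - t := by linarith
      refine ⟨t / (1-t), div_pos ht0 h1t, ?_⟩
      field_simp
      ring
  have hderiv : ∀ x ∈ Set.Ioi (0:ℝ),
      HasDerivWithinAt (fun x : ℝ => x / (1+x)) (1/(1+x)^2) (Set.Ioi 0) x := by
    intro x hx
    have hx' : (0:ℝ) < x := hx
    have hd : (1:ℝ) + x ≠ 0 := by linarith
    have := (hasDerivAt_id x).div ((hasDerivAt_const x (1:ℝ)).add (hasDerivAt_id x)) hd
    refine this.hasDerivWithinAt.congr_deriv ?_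
    simp only [Pi.add_apply, id]
    field_simp
    ring
  have hinj : Set.InjOn (fun x : ℝ => x / (1+x)) (Set.Ioi 0) := by
    intro x hx y hy hxy
    have hx' : (0:ℝ) < x := hx
    have hy' : (0:ℝ) < y := hy
    have hdx : (1:ℝ) + x ≠ 0 := by linarith
    have hdy : (1:ℝ) + y ≠ 0 := by linarith
    field_simp at hxy
    linarith
  have hsub := lintegral_image_1d measurableSet_Ioi hderiv hinj
    (fun t => ENNReal.ofReal (t^(a-1)*(1-t)^(b-1)))
  rw [himg, hI] at hsub
  rw [hsub]
  apply setLIntegral_congr_fun measurableSet_Ioi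
  intro x hx
  dsimp only
  have hx' : (0:ℝ) < x := hx
  have hd : (0:ℝ) < 1 + x := by linarith
  have habs : |1/(1+x)^2| = 1/(1+x)^2 := abs_of_pos (by positivity)
  rw [habs, ← ENNReal.ofReal_mul (by positivity)]
  congr 1
  have h1 : 1 - x/(1+x) = 1/(1+x) := by field_simp; ring
  have hpow2 : (1:ℝ)/(1+x)^2 = (1+x) ^ (-2:ℝ) := by
    rw [show (-2:ℝ) = -((2:ℕ):ℝ) by norm_num, rpow_neg hd.le, rpow_natCast, one_div]
  rw [h1, div_rpow hx'.le hd.le, div_rpow (by norm_num : (0:ℝ) ≤ 1) hd.le, one_rpow, hpow2,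
    div_eq_mul_inv (x ^ (a-1)), ← rpow_neg hd.le, one_div, ← rpow_neg hd.le,
    show -(a+b) = (-2) + (-(a-1) + -(b-1)) by ring, rpow_add hd, rpow_add hd]
  ring

lemma inner_lint {H : ℝ} (hH1 : 1/2 < H) (hH2 : H < 1) {u v : ℝ} (huv : u < v) :
    ∫⁻ r in Set.Iio u, ENNReal.ofReal ((u - r) ^ (H-3/2) * (v - r) ^ (H-3/2))
      = ENNReal.ofReal (Real.Gamma (H-1/2) * Real.Gamma (2-2*H) / Real.Gamma (3/2-H))
        * ENNReal.ofReal ((v-u) ^ (2*H-2)) := by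
  set α := H - 3/2 with hα
  set c := v - u with hc
  have hc0 : 0 < c := by simp [hc]; linarith
  -- substitution r = u - c * x
  have himg : (fun x : ℝ => u - c * x) '' Set.Ioi 0 = Set.Iio u := by
    ext r
    constructor
    · rintro ⟨x, hx, rfl⟩
      have : (0:ℝ) < c * x := mul_pos hc0 hx
      simp only [Set.mem_Iio]; linarith
    · intro hr
      refine ⟨(u - r)/c, div_pos (by simpa [sub_pos] using hr) hc0, ?_⟩
      field_simp
      ring
  have hderiv : ∀ x ∈ Set.Ioi (0:ℝ),
      HasDerivWithinAt (fun x : ℝ => u - c * x) (-c) (Set.Ioi 0) x := by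
    intro x _
    have h := ((hasDerivAt_id' x).const_mul c).const_sub u
    rw [mul_one] at h
    exact h.hasDerivWithinAt
  have hinj : Set.InjOn (fun x : ℝ => u - c * x) (Set.Ioi 0) := by
    intro x _ y _ hxy
    field_simp at hxy
    exact mul_left_cancel₀ hc0.ne' (by linarith : c * x = c * y)
  have hsub := lintegral_image_1d measurableSet_Ioi hderiv hinj
    (fun r => ENNReal.ofReal ((u - r) ^ α * (v - r) ^ α))
  rw [himg] at hsub
  rw [hsub]
  have hpoint : ∀ x ∈ Set.Ioi (0:ℝ),
      ENNReal.ofReal |(-c)| * ENNReal.ofReal ((u - (u - c*x)) ^ α * (v - (u - c*x)) ^ α)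
        = ENNReal.ofReal (c ^ (2*H-2)) * ENNReal.ofReal (x ^ α * (1+x) ^ α) := by
    intro x hx
    have hx' : (0:ℝ) < x := hx
    rw [abs_neg, abs_of_pos hc0, ← ENNReal.ofReal_mul hc0.le,
      ← ENNReal.ofReal_mul (by positivity)]
    congr 1
    have e1 : u - (u - c*x) = c * x := by ring
    have e2 : v - (u - c*x) = c * (1+x) := by rw [hc]; ring
    rw [e1, e2, mul_rpow hc0.le hx'.le, mul_rpow hc0.le (by linarith : (0:ℝ) ≤ 1+x),
      show 2*H - 2 = 1 + α + α by rw [hα]; ring, rpow_add hc0, rpow_add hc0, rpow_one]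
    ring
  rw [setLIntegral_congr_fun measurableSet_Ioi hpoint,
    lintegral_const_mul' _ _ ENNReal.ofReal_ne_top]
  have hb := betaLint (a := H - 1/2) (b := 2 - 2*H) (by linarith) (by linarith)
  rw [show H - 1/2 - 1 = α by rw [hα]; ring,
    show -((H - 1/2) + (2 - 2*H)) = α by rw [hα]; ring,
    show (H - 1/2) + (2 - 2*H) = 3/2 - H by ring] at hb
  rw [hb, mul_comm]

lemma rpow_shift_ii {α : ℝ} (hα : (-1:ℝ) < α) (r c d : ℝ) :
    IntervalIntegrable (fun u => (u - r) ^ α) volume c d := by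
  simpa using
    (intervalIntegral.intervalIntegrable_rpow' (a := c - r) (b := d - r) hα).comp_sub_right r

lemma kernel_diff {H cH : ℝ} (hα : (-1:ℝ) < H - 3/2) (KH : ℝ → ℝ → ℝ)
    (hKH : ∀ t r : ℝ, KH t r = if r < t then cH * ∫ u in r..t, (u - r) ^ (H - 3/2) else 0)
    {s t : ℝ} (hst : s < t) (r : ℝ) :
    KH t r - KH s r = cH * ∫ u in Set.Ioo (max s r) t, (u - r) ^ (H - 3/2) := by
  rcases lt_or_ge r s with hrs | hsr
  · rw [hKH t r, hKH s r, if_pos (hrs.trans hst), if_pos hrs, ← mul_sub]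
    rw [max_eq_left hrs.le, ← MeasureTheory.integral_Ioc_eq_integral_Ioo,
      ← intervalIntegral.integral_of_le hst.le]
    congr 1
    have hadd := intervalIntegral.integral_add_adjacent_intervals
      (rpow_shift_ii hα r r s) (rpow_shift_ii hα r s t)
    linarith [hadd]
  · rcases lt_or_ge r t with hrt | htr
    · rw [hKH t r, hKH s r, if_pos hrt, if_neg (not_lt.2 hsr), sub_zero]
      rw [max_eq_right hsr, ← MeasureTheory.integral_Ioc_eq_integral_Ioo,
        ← intervalIntegral.integral_of_le hrt.le]
    · rw [hKH t r, hKH s r, if_neg (not_lt.2 htr), if_neg (not_lt.2 (hst.le.trans htr)),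
        sub_zero]
      rw [Set.Ioo_eq_empty (by simp; intro h; linarith : ¬ max s r < t)]
      simp

lemma abs_rpow_integrableOn {p : ℝ} (hp : (-1:ℝ) < p) (u A B : ℝ) :
    IntegrableOn (fun v => |u - v| ^ p) (Set.Ioo A B) := by
  have h1 : IntegrableOn (fun v => |u - v| ^ p) (Set.Ioo A B ∩ Set.Iic u) := by
    have hi : IntervalIntegrable (fun v => (u - v) ^ p) volume A u := by
      simpa using
        (intervalIntegral.intervalIntegrable_rpow' (a := u - A) (b := u - u) hp).comp_sub_left u
    have h2 : IntegrableOn (fun v => (u - v) ^ p) (Set.Ioc A u) := hi.1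
    refine (h2.mono_set ?_).congr_fun ?_ (measurableSet_Ioo.inter measurableSet_Iic)
    · rintro v ⟨⟨hv1, _⟩, hv2⟩
      exact ⟨hv1, hv2⟩
    · rintro v ⟨_, hv2⟩
      simp only
      rw [abs_of_nonneg (by simp at hv2; linarith : (0:ℝ) ≤ u - v)]
  have h2 : IntegrableOn (fun v => |u - v| ^ p) (Set.Ioo A B ∩ Set.Ioi u) := by
    have h2 : IntegrableOn (fun v => (v - u) ^ p) (Set.Ioc u B) := (rpow_shift_ii hp u u B).1
    refine (h2.mono_set ?_).congr_fun ?_ (measurableSet_Ioo.inter measurableSet_Ioi)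
    · rintro v ⟨⟨_, hv1⟩, hv2⟩
      exact ⟨hv2, hv1.le⟩
    · rintro v ⟨_, hv2⟩
      simp only
      rw [abs_of_nonpos (by simp at hv2; linarith : u - v ≤ 0), neg_sub]
  have := h1.union h2
  rwa [← Set.inter_union_distrib_left, Set.Iic_union_Ioi, Set.inter_univ] at this

lemma Fmeas (αe s t : ℝ) :
    Measurable (({q : ℝ × ℝ | max s q.1 < q.2 ∧ q.2 < t}).indicator
      (fun q : ℝ × ℝ => ENNReal.ofReal ((q.2 - q.1) ^ αe))) := by
  apply Measurable.indicator
  · exact ((measurable_snd.sub measurable_fst).pow measurable_const).ennreal_ofReal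
  · have h1 : MeasurableSet {q : ℝ × ℝ | max s q.1 < q.2} :=
      measurableSet_lt (measurable_const.max measurable_fst) measurable_snd
    have h2 : MeasurableSet {q : ℝ × ℝ | q.2 < t} :=
      measurableSet_lt measurable_snd measurable_const
    exact (h1.inter h2)

lemma ell_eq (αe s t r : ℝ) :
    (∫⁻ u, ({q : ℝ × ℝ | max s q.1 < q.2 ∧ q.2 < t}).indicator
      (fun q : ℝ × ℝ => ENNReal.ofReal ((q.2 - q.1) ^ αe)) (r, u))
      = ∫⁻ u in Set.Ioo (max s r) t, ENNReal.ofReal ((u - r) ^ αe) := by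
  have h : ∀ u : ℝ, ({q : ℝ × ℝ | max s q.1 < q.2 ∧ q.2 < t}).indicator
      (fun q : ℝ × ℝ => ENNReal.ofReal ((q.2 - q.1) ^ αe)) (r, u)
      = (Set.Ioo (max s r) t).indicator (fun u => ENNReal.ofReal ((u - r) ^ αe)) u := by
    intro u
    rw [Set.indicator_apply, Set.indicator_apply]
    simp only [Set.mem_setOf_eq, Set.mem_Ioo]
  rw [lintegral_congr h, lintegral_indicator measurableSet_Ioo]

lemma ofReal_g {αe : ℝ} (hα : (-1:ℝ) < αe) (s t r : ℝ) :
    ENNReal.ofReal (∫ u in Set.Ioo (max s r) t, (u - r) ^ αe)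
      = ∫⁻ u in Set.Ioo (max s r) t, ENNReal.ofReal ((u - r) ^ αe) := by
  apply ofReal_integral_eq_lintegral_ofReal
  · exact ((rpow_shift_ii hα r (max s r) t).1).mono_set Set.Ioo_subset_Ioc_self
  · filter_upwards [ae_restrict_mem measurableSet_Ioo] with u hu
    exact rpow_nonneg (by simp only [Set.mem_Ioo, max_lt_iff] at hu; linarith [hu.1.2]) _

lemma g_nonneg (αe s t r : ℝ) : 0 ≤ ∫ u in Set.Ioo (max s r) t, (u - r) ^ αe :=
  setIntegral_nonneg measurableSet_Ioo fun u hu =>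
    rpow_nonneg (by simp only [Set.mem_Ioo, max_lt_iff] at hu; linarith [hu.1.2]) _


/-- For the fBm kernel `K^H(t,r) = c_H ∫_r^t (u-r)^(H-3/2) du` (set to `0`
for `t ≤ r`), with `H ∈ (1/2,1)` and `c_H² B(H-1/2, 2-2H) = H(2H-1)`, one has for
`s₁ < t₁`, `s₂ < t₂`:
`∫_ℝ (K^H(t₁,r) - K^H(s₁,r))(K^H(t₂,r) - K^H(s₂,r)) dr
  = H(2H-1) ∫_{s₁}^{t₁} ∫_{s₂}^{t₂} |u-v|^(2H-2) du dv`. -/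
theorem stmt4 (H cH : ℝ) (hH1 : 1/2 < H) (hH2 : H < 1)
    (hc : cH ^ 2 * (Real.Gamma (H - 1/2) * Real.Gamma (2 - 2*H) / Real.Gamma (3/2 - H))
        = H * (2*H - 1))
    (KH : ℝ → ℝ → ℝ)
    (hKH : ∀ t r : ℝ, KH t r =
      if r < t then cH * ∫ u in r..t, (u - r) ^ (H - 3/2) else 0)
    (s₁ t₁ s₂ t₂ : ℝ) (h₁ : s₁ < t₁) (h₂ : s₂ < t₂) :
    ∫ r : ℝ, (KH t₁ r - KH s₁ r) * (KH t₂ r - KH s₂ r) =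
      H * (2*H - 1) * ∫ u in s₁..t₁, ∫ v in s₂..t₂, |u - v| ^ (2*H - 2) := by
  have hα : (-1:ℝ) < H - 3/2 := by linarith
  have hp : (-1:ℝ) < 2*H - 2 := by linarith
  have hHpos : (0:ℝ) ≤ H * (2*H - 1) := by nlinarith
  set F₁ : ℝ × ℝ → ℝ≥0∞ := ({q : ℝ × ℝ | max s₁ q.1 < q.2 ∧ q.2 < t₁}).indicator
      (fun q : ℝ × ℝ => ENNReal.ofReal ((q.2 - q.1) ^ (H - 3/2))) with hF₁def
  set F₂ : ℝ × ℝ → ℝ≥0∞ := ({q : ℝ × ℝ | max s₂ q.1 < q.2 ∧ q.2 < t₂}).indicator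
      (fun q : ℝ × ℝ => ENNReal.ofReal ((q.2 - q.1) ^ (H - 3/2))) with hF₂def
  set ℓ₁ : ℝ → ℝ≥0∞ := fun r => ∫⁻ u, F₁ (r, u) with hℓ₁def
  set ℓ₂ : ℝ → ℝ≥0∞ := fun r => ∫⁻ u, F₂ (r, u) with hℓ₂def
  have mF₁ : Measurable F₁ := Fmeas _ _ _
  have mF₂ : Measurable F₂ := Fmeas _ _ _
  have mℓ₁ : Measurable ℓ₁ := by
    apply Measurable.lintegral_prod_right (f := fun r u => F₁ (r, u))
    exact mF₁.comp (measurable_fst.prodMk measurable_snd)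
  have mℓ₂ : Measurable ℓ₂ := by
    apply Measurable.lintegral_prod_right (f := fun r u => F₂ (r, u))
    exact mF₂.comp (measurable_fst.prodMk measurable_snd)
  have hdiff₁ : ∀ r, KH t₁ r - KH s₁ r
      = cH * ∫ u in Set.Ioo (max s₁ r) t₁, (u - r) ^ (H - 3/2) := kernel_diff hα KH hKH h₁
  have hdiff₂ : ∀ r, KH t₂ r - KH s₂ r
      = cH * ∫ u in Set.Ioo (max s₂ r) t₂, (u - r) ^ (H - 3/2) := kernel_diff hα KH hKH h₂
  have hnn : ∀ r, 0 ≤ (KH t₁ r - KH s₁ r) * (KH t₂ r - KH s₂ r) := by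
    intro r
    rw [hdiff₁ r, hdiff₂ r, mul_mul_mul_comm]
    exact mul_nonneg (mul_self_nonneg cH) (mul_nonneg (g_nonneg _ _ _ _) (g_nonneg _ _ _ _))
  have hprod : ∀ r, ENNReal.ofReal ((KH t₁ r - KH s₁ r) * (KH t₂ r - KH s₂ r))
      = ENNReal.ofReal (cH^2) * (ℓ₁ r * ℓ₂ r) := by
    intro r
    rw [hdiff₁ r, hdiff₂ r, mul_mul_mul_comm, ← sq cH,
      ENNReal.ofReal_mul (sq_nonneg cH), ENNReal.ofReal_mul (g_nonneg _ _ _ _),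
      ofReal_g hα s₁ t₁ r, ofReal_g hα s₂ t₂ r]
    simp only [hℓ₁def, hℓ₂def, hF₁def, hF₂def]
    rw [ell_eq, ell_eq]
  have hmeas : AEStronglyMeasurable
      (fun r => (KH t₁ r - KH s₁ r) * (KH t₂ r - KH s₂ r)) volume := by
    have heq : (fun r => (KH t₁ r - KH s₁ r) * (KH t₂ r - KH s₂ r))
        = fun r => (ENNReal.ofReal (cH^2) * (ℓ₁ r * ℓ₂ r)).toReal := by
      funext r
      rw [← hprod r, ENNReal.toReal_ofReal (hnn r)]
    rw [heq]
    exact ((measurable_const.mul (mℓ₁.mul mℓ₂)).ennreal_toReal).aestronglyMeasurable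
  rw [integral_eq_lintegral_of_nonneg_ae (Filter.Eventually.of_forall hnn) hmeas]
  rw [lintegral_congr hprod, lintegral_const_mul' _ _ ENNReal.ofReal_ne_top]
  -- Tonelli
  have hT : (∫⁻ r, ℓ₁ r * ℓ₂ r) = ∫⁻ u, ∫⁻ r, F₁ (r, u) * ℓ₂ r := by
    have e1 : ∀ r, ℓ₁ r * ℓ₂ r = ∫⁻ u, F₁ (r, u) * ℓ₂ r := fun r =>
      (lintegral_mul_const'' _ ((mF₁.comp measurable_prodMk_left).aemeasurable)).symm
    rw [lintegral_congr e1]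
    exact lintegral_lintegral_swap
      ((mF₁.mul (mℓ₂.comp measurable_fst)).aemeasurable)
  have hT2 : ∀ u, (∫⁻ r, F₁ (r, u) * ℓ₂ r) = ∫⁻ v, ∫⁻ r, F₁ (r, u) * F₂ (r, v) := by
    intro u
    have e1 : ∀ r, F₁ (r, u) * ℓ₂ r = ∫⁻ v, F₁ (r, u) * F₂ (r, v) := fun r =>
      (lintegral_const_mul'' _ ((mF₂.comp measurable_prodMk_left).aemeasurable)).symm
    rw [lintegral_congr e1]
    exact lintegral_lintegral_swap
      (((mF₁.comp (measurable_fst.prodMk measurable_const)).mul mF₂).aemeasurable)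
  -- representation of F as product of indicators
  have hF₁rep : ∀ (u r : ℝ), F₁ (r, u) = (Set.Ioo s₁ t₁).indicator (fun _ => (1:ℝ≥0∞)) u
      * (Set.Iio u).indicator (fun r => ENNReal.ofReal ((u - r) ^ (H - 3/2))) r := by
    intro u r
    rw [hF₁def]
    simp only [Set.indicator_apply, Set.mem_setOf_eq, Set.mem_Ioo, Set.mem_Iio, max_lt_iff]
    by_cases hc1 : s₁ < u <;> by_cases hc2 : u < t₁ <;> by_cases hc3 : r < u <;>
      simp [hc1, hc2, hc3]
  have hF₂rep : ∀ (v r : ℝ), F₂ (r, v) = (Set.Ioo s₂ t₂).indicator (fun _ => (1:ℝ≥0∞)) v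
      * (Set.Iio v).indicator (fun r => ENNReal.ofReal ((v - r) ^ (H - 3/2))) r := by
    intro v r
    rw [hF₂def]
    simp only [Set.indicator_apply, Set.mem_setOf_eq, Set.mem_Ioo, Set.mem_Iio, max_lt_iff]
    by_cases hc1 : s₂ < v <;> by_cases hc2 : v < t₂ <;> by_cases hc3 : r < v <;>
      simp [hc1, hc2, hc3]
  have ind_ne_top : ∀ (s : Set ℝ) (x : ℝ), s.indicator (fun _ => (1:ℝ≥0∞)) x ≠ ∞ := by
    intro s x
    by_cases h : x ∈ s <;> simp [h]
  have hinner : ∀ u v : ℝ, u ≠ v → (∫⁻ r, F₁ (r, u) * F₂ (r, v))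
      = (Set.Ioo s₁ t₁).indicator (fun _ => (1:ℝ≥0∞)) u
        * ((Set.Ioo s₂ t₂).indicator (fun _ => (1:ℝ≥0∞)) v
          * (ENNReal.ofReal (Real.Gamma (H - 1/2) * Real.Gamma (2 - 2*H) / Real.Gamma (3/2 - H))
            * ENNReal.ofReal (|u - v| ^ (2*H - 2)))) := by
    intro u v huv
    have e : ∀ r, F₁ (r, u) * F₂ (r, v)
        = (Set.Ioo s₁ t₁).indicator (fun _ => (1:ℝ≥0∞)) u
          * ((Set.Ioo s₂ t₂).indicator (fun _ => (1:ℝ≥0∞)) v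
            * ((Set.Iio u).indicator (fun r => ENNReal.ofReal ((u - r) ^ (H - 3/2))) r
              * (Set.Iio v).indicator (fun r => ENNReal.ofReal ((v - r) ^ (H - 3/2))) r)) := by
      intro r
      rw [hF₁rep, hF₂rep]
      ring
    rw [lintegral_congr e, lintegral_const_mul' _ _ (ind_ne_top _ _)]
    congr 1
    rw [lintegral_const_mul' _ _ (ind_ne_top _ _)]
    congr 1
    have e2 : ∀ r, (Set.Iio u).indicator (fun r => ENNReal.ofReal ((u - r) ^ (H - 3/2))) r
        * (Set.Iio v).indicator (fun r => ENNReal.ofReal ((v - r) ^ (H - 3/2))) r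
        = (Set.Iio (min u v)).indicator
            (fun r => ENNReal.ofReal ((u - r) ^ (H - 3/2) * (v - r) ^ (H - 3/2))) r := by
      intro r
      by_cases hru : r < u <;> by_cases hrv : r < v
      · simp [Set.indicator_apply, lt_min_iff, hru, hrv,
          ENNReal.ofReal_mul (rpow_nonneg (sub_nonneg.2 hru.le) (H-3/2))]
      · simp [Set.indicator_apply, lt_min_iff, hru, hrv]
      · simp [Set.indicator_apply, lt_min_iff, hru, hrv]
      · simp [Set.indicator_apply, lt_min_iff, hru, hrv]
    rw [lintegral_congr e2, lintegral_indicator measurableSet_Iio]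
    rcases huv.lt_or_gt with h | h
    · rw [min_eq_left h.le, show |u - v| = v - u by
        rw [abs_of_nonpos (by linarith), neg_sub]]
      exact inner_lint hH1 hH2 h
    · rw [min_eq_right h.le, show |u - v| = u - v by rw [abs_of_nonneg (by linarith)]]
      have hi := inner_lint hH1 hH2 h (u := v) (v := u)
      rw [← hi]
      exact lintegral_congr fun r => by rw [mul_comm]
  -- the double lintegral
  set K : ℝ → ℝ≥0∞ := fun u => ∫⁻ v in Set.Ioo s₂ t₂, ENNReal.ofReal (|u - v| ^ (2*H - 2))
    with hKdef
  have houter : ∀ u, (∫⁻ v, ∫⁻ r, F₁ (r, u) * F₂ (r, v))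
      = (Set.Ioo s₁ t₁).indicator (fun _ => (1:ℝ≥0∞)) u
        * (ENNReal.ofReal (Real.Gamma (H - 1/2) * Real.Gamma (2 - 2*H) / Real.Gamma (3/2 - H))
          * K u) := by
    intro u
    have hae : ∀ᵐ v : ℝ, v ≠ u := by
      refine (ae_iff).2 ?_
      simpa using measure_singleton u
    rw [lintegral_congr_ae (hae.mono fun v hv => hinner u v (Ne.symm hv))]
    rw [lintegral_const_mul' _ _ (ind_ne_top _ _)]
    congr 1
    have e3 : ∀ v, (Set.Ioo s₂ t₂).indicator (fun _ => (1:ℝ≥0∞)) v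
        * (ENNReal.ofReal (Real.Gamma (H - 1/2) * Real.Gamma (2 - 2*H) / Real.Gamma (3/2 - H))
          * ENNReal.ofReal (|u - v| ^ (2*H - 2)))
        = (Set.Ioo s₂ t₂).indicator
            (fun v => ENNReal.ofReal (Real.Gamma (H - 1/2) * Real.Gamma (2 - 2*H)
              / Real.Gamma (3/2 - H)) * ENNReal.ofReal (|u - v| ^ (2*H - 2))) v := by
      intro v
      by_cases h : v ∈ Set.Ioo s₂ t₂ <;> simp [h]
    rw [lintegral_congr e3, lintegral_indicator measurableSet_Ioo,
      lintegral_const_mul' _ _ ENNReal.ofReal_ne_top]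
  have hTfinal : (∫⁻ r, ℓ₁ r * ℓ₂ r)
      = ENNReal.ofReal (Real.Gamma (H - 1/2) * Real.Gamma (2 - 2*H) / Real.Gamma (3/2 - H))
        * ∫⁻ u in Set.Ioo s₁ t₁, K u := by
    rw [hT]
    rw [lintegral_congr fun u => (hT2 u).trans (houter u)]
    have e4 : ∀ u, (Set.Ioo s₁ t₁).indicator (fun _ => (1:ℝ≥0∞)) u
        * (ENNReal.ofReal (Real.Gamma (H - 1/2) * Real.Gamma (2 - 2*H) / Real.Gamma (3/2 - H))
          * K u)
        = (Set.Ioo s₁ t₁).indicator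
            (fun u => ENNReal.ofReal (Real.Gamma (H - 1/2) * Real.Gamma (2 - 2*H)
              / Real.Gamma (3/2 - H)) * K u) u := by
      intro u
      by_cases h : u ∈ Set.Ioo s₁ t₁ <;> simp [h]
    rw [lintegral_congr e4, lintegral_indicator measurableSet_Ioo,
      lintegral_const_mul' _ _ ENNReal.ofReal_ne_top]
  rw [hTfinal, ← mul_assoc, ← ENNReal.ofReal_mul (sq_nonneg cH), hc]
  rw [ENNReal.toReal_mul, ENNReal.toReal_ofReal hHpos]
  congr 1
  -- RHS computation
  have hKint : ∀ u, IntegrableOn (fun v => |u - v| ^ (2*H - 2)) (Set.Ioo s₂ t₂) := fun u =>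
    abs_rpow_integrableOn hp u s₂ t₂
  have hKofReal : ∀ u, ENNReal.ofReal (∫ v in Set.Ioo s₂ t₂, |u - v| ^ (2*H - 2)) = K u :=
    fun u => ofReal_integral_eq_lintegral_ofReal (hKint u)
      (Filter.Eventually.of_forall fun v => rpow_nonneg (abs_nonneg _) _)
  have hKne : ∀ u, K u ≠ ∞ := fun u => by rw [← hKofReal u]; exact ENNReal.ofReal_ne_top
  have hJ : ∀ u, (∫ v in s₂..t₂, |u - v| ^ (2*H - 2)) = (K u).toReal := by
    intro u
    rw [intervalIntegral.integral_of_le h₂.le, MeasureTheory.integral_Ioc_eq_integral_Ioo,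
      ← hKofReal u, ENNReal.toReal_ofReal
        (setIntegral_nonneg measurableSet_Ioo fun v _ => rpow_nonneg (abs_nonneg _) _)]
  have mK : Measurable K := by
    have hrepr : K = fun u => ∫⁻ v, ({q : ℝ × ℝ | q.2 ∈ Set.Ioo s₂ t₂}).indicator
        (fun q : ℝ × ℝ => ENNReal.ofReal (|q.1 - q.2| ^ (2*H - 2))) (u, v) := by
      funext u
      rw [hKdef]
      simp only
      rw [← lintegral_indicator measurableSet_Ioo]
      refine lintegral_congr fun v => ?_
      rw [Set.indicator_apply, Set.indicator_apply]
      simp only [Set.mem_setOf_eq]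
    rw [hrepr]
    apply Measurable.lintegral_prod_right (f := fun u v =>
      ({q : ℝ × ℝ | q.2 ∈ Set.Ioo s₂ t₂}).indicator
        (fun q : ℝ × ℝ => ENNReal.ofReal (|q.1 - q.2| ^ (2*H - 2))) (u, v))
    have hm : Measurable (({q : ℝ × ℝ | q.2 ∈ Set.Ioo s₂ t₂}).indicator
        (fun q : ℝ × ℝ => ENNReal.ofReal (|q.1 - q.2| ^ (2*H - 2)))) := by
      apply Measurable.indicator
      · exact (((measurable_fst.sub measurable_snd).abs).pow measurable_const).ennreal_ofReal
      · exact measurable_snd measurableSet_Ioo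
    exact hm.comp (measurable_fst.prodMk measurable_snd)
  rw [intervalIntegral.integral_of_le h₁.le, MeasureTheory.integral_Ioc_eq_integral_Ioo]
  rw [setIntegral_congr_fun measurableSet_Ioo (fun u _ => hJ u)]
  rw [integral_eq_lintegral_of_nonneg_ae
    (Filter.Eventually.of_forall fun u => ENNReal.toReal_nonneg)
    (mK.ennreal_toReal.aestronglyMeasurable)]
  congr 1
  refine setLIntegral_congr_fun measurableSet_Ioo ?_
  intro u _
  exact (ENNReal.ofReal_toReal (hKne u)).symm
end

section
/- Let α ∈ (0,1/2), s < t, and G : ℝ → ℒ₂(U,V) (Hilbert–Schmidt operators between separable Hilbert spaces) with ‖G‖_{ℒ₂(U,V)} ∈ L^{2/(1+2α)}(s,t). If φ : ℝ² → ℝ satisfies |φ(u,v)| ≤ C|u−v|^{2α−1}, then ∫_s^t ∫_s^t ⟨G(u), G(v)⟩_{ℒ₂(U,V)} φ(u,v) du dv ≤ C' (∫_s^t ‖G(u)‖_{ℒ₂(U,V)}^{2/(1+2α)} du)^{1+2α} for some constant C' depending only on C and α. -/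
open MeasureTheory Real intervalIntegral
open Set
open scoped ENNReal

section Stmt6Aux

lemma lint_neg (g : ℝ → ℝ≥0∞) : (∫⁻ v, g (-v)) = ∫⁻ v, g v := by
  conv_rhs => rw [← Measure.map_neg_eq_self (volume : Measure ℝ)]
  rw [show (Neg.neg : ℝ → ℝ) = ⇑(MeasurableEquiv.neg ℝ) from rfl, lintegral_map_equiv]

/-- positive-side computation -/
lemma pos_piece {e r : ℝ} (he : -1 < e) (hr : 0 < r) :
    (∫⁻ w in Ioo 0 r, ENNReal.ofReal (|w| ^ e)) = ENNReal.ofReal (r ^ (e + 1) / (e + 1)) := by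
  have h1 : (∫⁻ w in Ioo 0 r, ENNReal.ofReal (|w| ^ e)) = ∫⁻ w in Ioo 0 r, ENNReal.ofReal (w ^ e) := by
    refine setLIntegral_congr_fun measurableSet_Ioo (fun w hw => ?_)
    rw [abs_of_pos hw.1]
  have hint : IntegrableOn (fun w : ℝ => w ^ e) (Ioc 0 r) volume := by
    rw [← intervalIntegrable_iff_integrableOn_Ioc_of_le hr.le]
    exact intervalIntegral.intervalIntegrable_rpow' he
  have hint' : IntegrableOn (fun w : ℝ => w ^ e) (Ioo 0 r) volume :=
    hint.mono_set Ioo_subset_Ioc_self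
  have hnn : 0 ≤ᵐ[volume.restrict (Ioo 0 r)] fun w : ℝ => w ^ e :=
    (ae_restrict_iff' measurableSet_Ioo).2 (ae_of_all _ fun w hw => Real.rpow_nonneg hw.1.le e)
  rw [h1, ← ofReal_integral_eq_lintegral_ofReal hint' hnn]
  congr 1
  rw [← integral_Ioc_eq_integral_Ioo, ← intervalIntegral.integral_of_le hr.le,
    integral_rpow (Or.inl he), Real.zero_rpow (by linarith : e + 1 ≠ 0), sub_zero]

lemma near_kernel {e r : ℝ} (he : -1 < e) (he' : e < 0) (hr : 0 < r) (u : ℝ) :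
    (∫⁻ v, {v : ℝ | |v - u| < r}.indicator (fun v => ENNReal.ofReal (|v - u| ^ e)) v) ≤
      ENNReal.ofReal (2 * (r ^ (e + 1) / (e + 1))) := by
  have hstep : (∫⁻ v, {v : ℝ | |v - u| < r}.indicator (fun v => ENNReal.ofReal (|v - u| ^ e)) v)
      = ∫⁻ w, {w : ℝ | |w| < r}.indicator (fun w => ENNReal.ofReal (|w| ^ e)) w := by
    rw [← lintegral_sub_right_eq_self (fun w => {w : ℝ | |w| < r}.indicator
      (fun w => ENNReal.ofReal (|w| ^ e)) w) u]
    exact lintegral_congr fun v => by simp [Set.indicator_apply]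
  rw [hstep, lintegral_indicator (by exact measurableSet_lt (measurable_id.abs) measurable_const)]
  have hset : {w : ℝ | |w| < r} ⊆ Ioo (-r) 0 ∪ Ioo 0 r ∪ {0} := by
    intro w hw
    rcases lt_trichotomy w 0 with h | h | h
    · exact Or.inl (Or.inl ⟨by simpa using (abs_lt.1 hw).1, h⟩)
    · exact Or.inr (by simp [h])
    · exact Or.inl (Or.inr ⟨h, (abs_lt.1 hw).2⟩)
  calc (∫⁻ w in {w : ℝ | |w| < r}, ENNReal.ofReal (|w| ^ e))
      ≤ ∫⁻ w in Ioo (-r) 0 ∪ Ioo 0 r ∪ {0}, ENNReal.ofReal (|w| ^ e) := lintegral_mono_set hset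
    _ ≤ (∫⁻ w in Ioo (-r) 0 ∪ Ioo 0 r, ENNReal.ofReal (|w| ^ e))
          + ∫⁻ w in ({0} : Set ℝ), ENNReal.ofReal (|w| ^ e) := lintegral_union_le _ _ _
    _ ≤ ((∫⁻ w in Ioo (-r) 0, ENNReal.ofReal (|w| ^ e))
          + ∫⁻ w in Ioo 0 r, ENNReal.ofReal (|w| ^ e)) + 0 := by
        gcongr
        · exact lintegral_union_le _ _ _
        · have : volume ({0} : Set ℝ) = 0 := measure_singleton 0
          rw [setLIntegral_measure_zero _ _ this]
    _ = (∫⁻ w in Ioo (-r) 0, ENNReal.ofReal (|w| ^ e))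
          + ∫⁻ w in Ioo 0 r, ENNReal.ofReal (|w| ^ e) := add_zero _
    _ ≤ ENNReal.ofReal (r ^ (e + 1) / (e + 1)) + ENNReal.ofReal (r ^ (e + 1) / (e + 1)) := by
        have hneg : (∫⁻ w in Ioo (-r) 0, ENNReal.ofReal (|w| ^ e))
            = ∫⁻ w in Ioo 0 r, ENNReal.ofReal (|w| ^ e) := by
          rw [← lintegral_indicator measurableSet_Ioo, ← lintegral_indicator measurableSet_Ioo]
          rw [← lint_neg (fun w => (Ioo (-r) 0).indicator (fun w => ENNReal.ofReal (|w| ^ e)) w)]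
          refine lintegral_congr fun w => ?_
          by_cases hw : w ∈ Ioo 0 r
          · rw [Set.indicator_of_mem (by constructor <;> [linarith [hw.2]; linarith [hw.1]] :
              -w ∈ Ioo (-r) 0), Set.indicator_of_mem hw, abs_neg]
          · rw [Set.indicator_of_notMem (fun hc => hw ⟨by linarith [hc.2], by linarith [hc.1]⟩),
              Set.indicator_of_notMem hw]
        rw [hneg, pos_piece he hr]
    _ = ENNReal.ofReal (2 * (r ^ (e + 1) / (e + 1))) := by
        have h1 : (0:ℝ) ≤ r ^ (e + 1) / (e + 1) :=
          div_nonneg (Real.rpow_nonneg hr.le _) (by linarith)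
        rw [← ENNReal.ofReal_add h1 h1]; congr 1; ring

lemma lint_neg' (g : ℝ → ℝ≥0∞) : (∫⁻ v, g (-v)) = ∫⁻ v, g v := by
  conv_rhs => rw [← Measure.map_neg_eq_self (volume : Measure ℝ)]
  rw [show (Neg.neg : ℝ → ℝ) = ⇑(MeasurableEquiv.neg ℝ) from rfl, lintegral_map_equiv]

lemma far_pos_piece {r : ℝ} (hr : 0 < r) :
    (∫⁻ w in Ici r, ENNReal.ofReal (|w| ^ (-2 : ℝ))) = ENNReal.ofReal (1 / r) := by
  rw [setLIntegral_congr Ioi_ae_eq_Ici.symm]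
  have h1 : (∫⁻ w in Ioi r, ENNReal.ofReal (|w| ^ (-2:ℝ)))
      = ∫⁻ w in Ioi r, ENNReal.ofReal (w ^ (-2:ℝ)) := by
    refine setLIntegral_congr_fun measurableSet_Ioi (fun w hw => ?_)
    rw [abs_of_pos (hr.trans hw)]
  have hint : IntegrableOn (fun w : ℝ => w ^ (-2:ℝ)) (Ioi r) volume :=
    integrableOn_Ioi_rpow_of_lt (by norm_num) hr
  have hnn : 0 ≤ᵐ[volume.restrict (Ioi r)] fun w : ℝ => w ^ (-2:ℝ) :=
    (ae_restrict_iff' measurableSet_Ioi).2 (ae_of_all _ fun w hw =>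
      Real.rpow_nonneg (hr.trans hw).le _)
  rw [h1, ← ofReal_integral_eq_lintegral_ofReal hint hnn]
  congr 1
  rw [integral_Ioi_rpow_of_lt (by norm_num) hr]
  norm_num
  exact Real.rpow_neg_one r

lemma far_kernel {r : ℝ} (hr : 0 < r) (u : ℝ) :
    (∫⁻ v, {v : ℝ | r ≤ |v - u|}.indicator (fun v => ENNReal.ofReal (|v - u| ^ (-2 : ℝ))) v) ≤
      ENNReal.ofReal (2 / r) := by
  have hstep : (∫⁻ v, {v : ℝ | r ≤ |v - u|}.indicator
        (fun v => ENNReal.ofReal (|v - u| ^ (-2:ℝ))) v)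
      = ∫⁻ w, {w : ℝ | r ≤ |w|}.indicator (fun w => ENNReal.ofReal (|w| ^ (-2:ℝ))) w := by
    rw [← lintegral_sub_right_eq_self (fun w => {w : ℝ | r ≤ |w|}.indicator
      (fun w => ENNReal.ofReal (|w| ^ (-2:ℝ))) w) u]
    exact lintegral_congr fun v => by simp [Set.indicator_apply]
  rw [hstep, lintegral_indicator (by exact measurableSet_le measurable_const measurable_id.abs)]
  have hset : {w : ℝ | r ≤ |w|} ⊆ Iic (-r) ∪ Ici r := by
    intro w hw
    have hw' : r ≤ |w| := hw
    rcases le_abs.1 hw' with h | h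
    · exact Or.inr h
    · exact Or.inl (by simp only [mem_Iic]; linarith)
  calc (∫⁻ w in {w : ℝ | r ≤ |w|}, ENNReal.ofReal (|w| ^ (-2:ℝ)))
      ≤ ∫⁻ w in Iic (-r) ∪ Ici r, ENNReal.ofReal (|w| ^ (-2:ℝ)) := lintegral_mono_set hset
    _ ≤ (∫⁻ w in Iic (-r), ENNReal.ofReal (|w| ^ (-2:ℝ)))
          + ∫⁻ w in Ici r, ENNReal.ofReal (|w| ^ (-2:ℝ)) := lintegral_union_le _ _ _
    _ ≤ ENNReal.ofReal (1 / r) + ENNReal.ofReal (1 / r) := by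
        have hneg : (∫⁻ w in Iic (-r), ENNReal.ofReal (|w| ^ (-2:ℝ)))
            = ∫⁻ w in Ici r, ENNReal.ofReal (|w| ^ (-2:ℝ)) := by
          rw [← lintegral_indicator measurableSet_Iic, ← lintegral_indicator measurableSet_Ici]
          rw [← lint_neg' (fun w => (Iic (-r)).indicator (fun w => ENNReal.ofReal (|w| ^ (-2:ℝ))) w)]
          refine lintegral_congr fun w => ?_
          by_cases hw : w ∈ Ici r
          · rw [Set.indicator_of_mem (by simpa using hw : -w ∈ Iic (-r)),
              Set.indicator_of_mem hw, abs_neg]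
          · rw [Set.indicator_of_notMem (fun hc => hw (by simpa using hc)),
              Set.indicator_of_notMem hw]
        rw [hneg, far_pos_piece hr]
    _ = ENNReal.ofReal (2 / r) := by
        rw [← ENNReal.ofReal_add (by positivity) (by positivity)]; congr 1; ring

lemma real_calc {α a x r : ℝ} (hα0 : 0 < α) (hα : α < 1/2) (ha : 0 < a) (hx : 0 < x)
    (hr : r = (a / x) ^ (2 / (1 + 2*α))) :
    x * (x * (2 * (r ^ (2*α) / (2*α))) + a * (2 / r) ^ ((1 - 2*α)/2)) ≤
      (1/α + 2) * (a ^ (4*α/(1+2*α)) * x ^ (2/(1+2*α))) := by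
  have h12 : (0:ℝ) < 1 + 2*α := by linarith
  have h12' : (0:ℝ) < 1 - 2*α := by linarith
  have hb : 0 < a / x := div_pos ha hx
  have hrpos : 0 < r := hr ▸ Real.rpow_pos_of_pos hb _
  have key : ∀ c : ℝ, r ^ c = a ^ (2/(1+2*α) * c) / x ^ (2/(1+2*α) * c) := by
    intro c
    rw [hr, ← Real.rpow_mul hb.le, Real.div_rpow ha.le hx.le]
  have hr1 : r ^ (2*α) = a ^ (4*α/(1+2*α)) / x ^ (4*α/(1+2*α)) := by
    rw [key (2*α)]
    norm_num
    rw [show 2/(1+2*α) * (2*α) = 4*α/(1+2*α) by field_simp; ring]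
  have hrδ : r ^ ((1-2*α)/2) = a ^ ((1-2*α)/(1+2*α)) / x ^ ((1-2*α)/(1+2*α)) := by
    rw [key ((1-2*α)/2)]
    rw [show 2/(1+2*α) * ((1-2*α)/2) = (1-2*α)/(1+2*α) by field_simp]
  have hxp : x ^ (2/(1+2*α)) = x * x / x ^ (4*α/(1+2*α)) := by
    rw [show 2/(1+2*α) = 1 + 1 - 4*α/(1+2*α) by field_simp; ring,
      Real.rpow_sub hx, Real.rpow_add hx, Real.rpow_one]
  have hxp2 : x ^ (2/(1+2*α)) = x * x ^ ((1-2*α)/(1+2*α)) := by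
    rw [show 2/(1+2*α) = 1 + (1-2*α)/(1+2*α) by field_simp; ring,
      Real.rpow_add hx, Real.rpow_one]
  have haθ : a ^ (4*α/(1+2*α)) = a / a ^ ((1-2*α)/(1+2*α)) := by
    rw [show 4*α/(1+2*α) = 1 - (1-2*α)/(1+2*α) by field_simp; ring,
      Real.rpow_sub ha, Real.rpow_one]
  have h2r : (2 / r) ^ ((1-2*α)/2) = 2 ^ ((1-2*α)/2) / r ^ ((1-2*α)/2) :=
    Real.div_rpow (by norm_num) hrpos.le _
  have e1 : x * (x * (2 * (r ^ (2*α) / (2*α)))) =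
      1/α * (a ^ (4*α/(1+2*α)) * x ^ (2/(1+2*α))) := by
    rw [hr1, hxp]
    have hxθ : (0:ℝ) < x ^ (4*α/(1+2*α)) := Real.rpow_pos_of_pos hx _
    field_simp
  have e2 : x * (a * (2 / r) ^ ((1-2*α)/2)) =
      2 ^ ((1-2*α)/2) * (a ^ (4*α/(1+2*α)) * x ^ (2/(1+2*α))) := by
    rw [h2r, hrδ, hxp2, haθ]
    have h1 : (0:ℝ) < x ^ ((1-2*α)/(1+2*α)) := Real.rpow_pos_of_pos hx _
    have h2 : (0:ℝ) < a ^ ((1-2*α)/(1+2*α)) := Real.rpow_pos_of_pos ha _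
    field_simp
  have hM : (0:ℝ) ≤ a ^ (4*α/(1+2*α)) * x ^ (2/(1+2*α)) := by positivity
  have h2δ : (2:ℝ) ^ ((1-2*α)/2) ≤ 2 := by
    calc (2:ℝ) ^ ((1-2*α)/2) ≤ 2 ^ (1:ℝ) :=
          Real.rpow_le_rpow_of_exponent_le (by norm_num) (by linarith)
      _ = 2 := Real.rpow_one 2
  have hαinv : (0:ℝ) < 1/α := by positivity
  calc x * (x * (2 * (r ^ (2*α) / (2*α))) + a * (2 / r) ^ ((1 - 2*α)/2))
      = 1/α * (a ^ (4*α/(1+2*α)) * x ^ (2/(1+2*α)))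
        + 2 ^ ((1-2*α)/2) * (a ^ (4*α/(1+2*α)) * x ^ (2/(1+2*α))) := by
        rw [mul_add, e1, e2]
    _ ≤ (1/α + 2) * (a ^ (4*α/(1+2*α)) * x ^ (2/(1+2*α))) := by nlinarith [hM, h2δ]

lemma core {α : ℝ} (hα0 : 0 < α) (hα : α < 1/2) (s t : ℝ)
    (f : ℝ → ℝ≥0∞) (hf : Measurable f) :
    (∫⁻ u in Set.Ioc s t, ∫⁻ v in Set.Ioc s t,
        f u * f v * ENNReal.ofReal (|u - v| ^ (2*α - 1))) ≤
      ENNReal.ofReal (2/α + 4) * (∫⁻ u in Set.Ioc s t, f u ^ (2/(1+2*α))) ^ (1+2*α) := by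
  have h12 : (0:ℝ) < 1 + 2*α := by linarith
  have h12' : (0:ℝ) < 1 - 2*α := by linarith
  set μ := volume.restrict (Set.Ioc s t) with hμ
  set p := 2/(1+2*α) with hpdef
  set q := 2/(1-2*α) with hqdef
  set e := 2*α - 1 with hedef
  have hp0 : 0 < p := by positivity
  have hq0 : 0 < q := by positivity
  have hpq : p.HolderConjugate q := by
    rw [Real.holderConjugate_iff]
    constructor
    · show (1:ℝ) < 2/(1+2*α)
      rw [lt_div_iff₀ h12]; linarith
    · show (2/(1+2*α))⁻¹ + (2/(1-2*α))⁻¹ = 1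
      rw [inv_div, inv_div]; field_simp; ring
  set S := ∫⁻ u, f u ^ p ∂μ with hSdef
  by_cases hS0 : S = 0
  · have hf0 : ∀ᵐ u ∂μ, f u = 0 := by
      have h1 : ∀ᵐ u ∂μ, f u ^ p = 0 := (lintegral_eq_zero_iff (hf.pow_const p)).1 hS0
      filter_upwards [h1] with u hu
      rcases (ENNReal.rpow_eq_zero_iff).1 hu with ⟨h, _⟩ | ⟨_, h⟩
      · exact h
      · linarith
    have h2 : ∀ᵐ u ∂μ, (∫⁻ v, f u * f v * ENNReal.ofReal (|u - v| ^ e) ∂μ) = 0 := by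
      filter_upwards [hf0] with u hu
      simp [hu]
    calc (∫⁻ u, ∫⁻ v, f u * f v * ENNReal.ofReal (|u - v| ^ e) ∂μ ∂μ)
        = ∫⁻ u, (0:ℝ≥0∞) ∂μ := lintegral_congr_ae h2
      _ = 0 := lintegral_zero
      _ ≤ _ := zero_le
  by_cases hST : S = ⊤
  · rw [hST, ENNReal.top_rpow_of_pos (by linarith),
      ENNReal.mul_top (ENNReal.ofReal_pos.2 (by positivity)).ne']
    exact le_top
  -- main case
  set A := S ^ (1/p) with hAdef
  have hA0 : A ≠ 0 := by
    rw [hAdef]; simp [ENNReal.rpow_eq_zero_iff, hS0, hST]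
  have hAT : A ≠ ⊤ := by
    rw [hAdef]; simp [ENNReal.rpow_eq_top_iff, hS0, hST]
  set a := A.toReal with hadef
  have ha : 0 < a := ENNReal.toReal_pos hA0 hAT
  have hAa : A = ENNReal.ofReal a := (ENNReal.ofReal_toReal hAT).symm
  set G1 : ℝ × ℝ → ℝ≥0∞ := fun w =>
    if f w.2 ≤ f w.1 then f w.1 * f w.2 * ENNReal.ofReal (|w.2 - w.1| ^ e) else 0 with hG1def
  set G2 : ℝ × ℝ → ℝ≥0∞ := fun w =>
    if f w.1 < f w.2 then f w.1 * f w.2 * ENNReal.ofReal (|w.2 - w.1| ^ e) else 0 with hG2def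
  have hKm : Measurable fun w : ℝ × ℝ => ENNReal.ofReal (|w.2 - w.1| ^ e) :=
    ((measurable_snd.sub measurable_fst).abs.pow_const e).ennreal_ofReal
  have hG1 : Measurable G1 :=
    Measurable.ite (measurableSet_le (hf.comp measurable_snd) (hf.comp measurable_fst))
      (((hf.comp measurable_fst).mul (hf.comp measurable_snd)).mul hKm) measurable_const
  have hG2 : Measurable G2 :=
    Measurable.ite (measurableSet_lt (hf.comp measurable_fst) (hf.comp measurable_snd))
      (((hf.comp measurable_fst).mul (hf.comp measurable_snd)).mul hKm) measurable_const
  have decomp : ∀ u v : ℝ, f u * f v * ENNReal.ofReal (|u - v| ^ e) = G1 (u,v) + G2 (u,v) := by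
    intro u v
    rw [abs_sub_comm u v]
    simp only [hG1def, hG2def]
    rcases le_or_gt (f v) (f u) with h | h
    · rw [if_pos h, if_neg (not_lt.2 h), add_zero]
    · rw [if_neg (not_le.2 h), if_pos h, zero_add]
  have hsplit : (∫⁻ u, ∫⁻ v, f u * f v * ENNReal.ofReal (|u - v| ^ e) ∂μ ∂μ)
      = (∫⁻ u, ∫⁻ v, G1 (u,v) ∂μ ∂μ) + ∫⁻ u, ∫⁻ v, G2 (u,v) ∂μ ∂μ := by
    have h1 : ∀ u, (∫⁻ v, f u * f v * ENNReal.ofReal (|u - v| ^ e) ∂μ)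
        = (∫⁻ v, G1 (u,v) ∂μ) + ∫⁻ v, G2 (u,v) ∂μ := by
      intro u
      rw [← lintegral_add_left (show Measurable fun v => G1 (u,v) from
        hG1.comp measurable_prodMk_left)]
      exact lintegral_congr fun v => decomp u v
    rw [lintegral_congr h1]
    exact lintegral_add_left (Measurable.lintegral_prod_right' hG1) _
  have hswap : (∫⁻ u, ∫⁻ v, G2 (u,v) ∂μ ∂μ) = ∫⁻ u, ∫⁻ v, G2 (v,u) ∂μ ∂μ :=
    lintegral_lintegral_swap hG2.aemeasurable
  have hG21 : ∀ u v : ℝ, G2 (v,u) ≤ G1 (u,v) := by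
    intro u v
    simp only [hG1def, hG2def]
    by_cases h : f v < f u
    · rw [if_pos h, if_pos h.le, mul_comm (f v) (f u), abs_sub_comm]
    · rw [if_neg h]; exact zero_le
  have hsym : (∫⁻ u, ∫⁻ v, f u * f v * ENNReal.ofReal (|u - v| ^ e) ∂μ ∂μ)
      ≤ 2 * ∫⁻ u, ∫⁻ v, G1 (u,v) ∂μ ∂μ := by
    rw [hsplit, hswap, two_mul]
    exact add_le_add le_rfl (lintegral_mono fun u => lintegral_mono fun v => hG21 u v)
  -- a.e. finiteness
  have hfin : ∀ᵐ u ∂μ, f u ≠ ⊤ := by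
    have h1 : ∀ᵐ u ∂μ, f u ^ p < ⊤ := ae_lt_top (hf.pow_const p) hST
    filter_upwards [h1] with u hu hc
    rw [hc, ENNReal.top_rpow_of_pos hp0] at hu
    exact lt_irrefl _ hu
  set θ := 4*α/(1+2*α) with hθdef
  have hθ0 : 0 ≤ θ := by positivity
  have inner_bd : ∀ᵐ u ∂μ, (∫⁻ v, G1 (u,v) ∂μ)
      ≤ ENNReal.ofReal (1/α + 2) * (A ^ θ * f u ^ p) := by
    filter_upwards [hfin] with u hu
    by_cases h0 : f u = 0
    · have hz : ∀ v, G1 (u,v) = 0 := by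
        intro v; simp only [hG1def]
        split_ifs with h
        · rw [h0, zero_mul, zero_mul]
        · rfl
      rw [lintegral_congr hz, lintegral_zero]
      exact zero_le
    · set x := (f u).toReal with hxdef
      have hx : 0 < x := ENNReal.toReal_pos h0 hu
      have hfux : f u = ENNReal.ofReal x := (ENNReal.ofReal_toReal hu).symm
      set r := (a / x) ^ (2/(1+2*α)) with hrdef
      have hrpos : 0 < r := Real.rpow_pos_of_pos (div_pos ha hx) _
      set kN : ℝ → ℝ≥0∞ := fun v => {v : ℝ | |v - u| < r}.indicator
        (fun v => ENNReal.ofReal (|v - u| ^ e)) v with hkNdef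
      set kF : ℝ → ℝ≥0∞ := fun v => {v : ℝ | r ≤ |v - u|}.indicator
        (fun v => ENNReal.ofReal (|v - u| ^ e)) v with hkFdef
      have hkNm : Measurable kN := Measurable.indicator
        (((measurable_id.sub_const u).abs.pow_const e).ennreal_ofReal)
        (measurableSet_lt (measurable_id.sub_const u).abs measurable_const)
      have hkFm : Measurable kF := Measurable.indicator
        (((measurable_id.sub_const u).abs.pow_const e).ennreal_ofReal)
        (measurableSet_le measurable_const (measurable_id.sub_const u).abs)
      have ptwise : ∀ v, G1 (u,v) ≤ f u * (f u * kN v + f v * kF v) := by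
        intro v
        simp only [hG1def]
        split_ifs with hc
        · rcases lt_or_ge |v - u| r with hn | hn
          · calc f u * f v * ENNReal.ofReal (|v - u| ^ e)
                ≤ f u * (f u * ENNReal.ofReal (|v - u| ^ e)) := by
                  rw [mul_assoc]
                  exact mul_le_mul_right (mul_le_mul_left hc _) _
              _ ≤ f u * (f u * kN v + f v * kF v) := by
                  have hmem : kN v = ENNReal.ofReal (|v - u| ^ e) :=
                    Set.indicator_of_mem (show v ∈ {v : ℝ | |v - u| < r} from hn) _
                  rw [hmem]
                  exact mul_le_mul_right le_self_add _
          · calc f u * f v * ENNReal.ofReal (|v - u| ^ e)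
                = f u * (f v * ENNReal.ofReal (|v - u| ^ e)) := by rw [mul_assoc]
              _ ≤ f u * (f u * kN v + f v * kF v) := by
                  have hmem : kF v = ENNReal.ofReal (|v - u| ^ e) :=
                    Set.indicator_of_mem (show v ∈ {v : ℝ | r ≤ |v - u|} from hn) _
                  rw [hmem]
                  exact mul_le_mul_right le_add_self _
        · exact zero_le
      have hNear : (∫⁻ v, kN v ∂μ) ≤ ENNReal.ofReal (2 * (r ^ (2*α) / (2*α))) := by
        have h1 : (∫⁻ v, kN v ∂μ) ≤ ∫⁻ v, kN v :=
          lintegral_mono' Measure.restrict_le_self le_rfl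
        refine h1.trans ?_
        have h2 := near_kernel (show (-1:ℝ) < e by rw [hedef]; linarith)
          (show e < 0 by rw [hedef]; linarith) hrpos u
        rw [show e + 1 = 2*α by rw [hedef]; ring] at h2
        exact h2
      have hFar : (∫⁻ v, f v * kF v ∂μ) ≤ A * ENNReal.ofReal ((2/r) ^ (1/q)) := by
        have hH := ENNReal.lintegral_mul_le_Lp_mul_Lq μ hpq hf.aemeasurable hkFm.aemeasurable
        simp only [Pi.mul_apply] at hH
        refine hH.trans (mul_le_mul' le_rfl ?_)
        have hkq : ∀ v, kF v ^ q = {v : ℝ | r ≤ |v - u|}.indicator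
            (fun v => ENNReal.ofReal (|v - u| ^ (-2:ℝ))) v := by
          intro v
          by_cases hv : r ≤ |v - u|
          · have hv' : v ∈ {v : ℝ | r ≤ |v - u|} := hv
            rw [hkFdef]
            simp only []
            rw [Set.indicator_of_mem hv', Set.indicator_of_mem hv']
            rw [ENNReal.ofReal_rpow_of_nonneg (Real.rpow_nonneg (abs_nonneg _) e) hq0.le]
            congr 1
            rw [← Real.rpow_mul (abs_nonneg _)]
            congr 1
            rw [hedef, hqdef]; field_simp; ring
          · have hv' : v ∉ {v : ℝ | r ≤ |v - u|} := hv
            rw [hkFdef]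
            simp only []
            rw [Set.indicator_of_notMem hv', Set.indicator_of_notMem hv',
              ENNReal.zero_rpow_of_pos hq0]
        calc (∫⁻ v, kF v ^ q ∂μ) ^ (1/q)
            ≤ (ENNReal.ofReal (2/r)) ^ (1/q) := by
              refine ENNReal.rpow_le_rpow ?_ (by positivity)
              calc (∫⁻ v, kF v ^ q ∂μ)
                  = ∫⁻ v, {v : ℝ | r ≤ |v - u|}.indicator
                      (fun v => ENNReal.ofReal (|v - u| ^ (-2:ℝ))) v ∂μ := lintegral_congr hkq
                _ ≤ ∫⁻ v, {v : ℝ | r ≤ |v - u|}.indicator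
                      (fun v => ENNReal.ofReal (|v - u| ^ (-2:ℝ))) v :=
                    lintegral_mono' Measure.restrict_le_self le_rfl
                _ ≤ ENNReal.ofReal (2/r) := far_kernel hrpos u
          _ = ENNReal.ofReal ((2/r) ^ (1/q)) :=
              ENNReal.ofReal_rpow_of_nonneg (by positivity) (by positivity)
      calc (∫⁻ v, G1 (u,v) ∂μ)
          ≤ ∫⁻ v, f u * (f u * kN v + f v * kF v) ∂μ := lintegral_mono ptwise
        _ = f u * ∫⁻ v, (f u * kN v + f v * kF v) ∂μ := lintegral_const_mul' _ _ hu
        _ = f u * ((∫⁻ v, f u * kN v ∂μ) + ∫⁻ v, f v * kF v ∂μ) := by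
            rw [lintegral_add_left (hkNm.const_mul (f u))]
        _ = f u * (f u * (∫⁻ v, kN v ∂μ) + ∫⁻ v, f v * kF v ∂μ) := by
            rw [lintegral_const_mul' _ _ hu]
        _ ≤ f u * (f u * ENNReal.ofReal (2 * (r ^ (2*α) / (2*α)))
              + A * ENNReal.ofReal ((2/r) ^ (1/q))) :=
            mul_le_mul_right (add_le_add (mul_le_mul_right hNear _) hFar) _
        _ ≤ ENNReal.ofReal (1/α + 2) * (A ^ θ * f u ^ p) := by
            rw [hfux, hAa]
            have hc1 : (0:ℝ) ≤ 2 * (r ^ (2*α) / (2*α)) := by positivity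
            have hc2 : (0:ℝ) ≤ a * ((2/r) ^ (1/q)) := by positivity
            calc ENNReal.ofReal x * (ENNReal.ofReal x * ENNReal.ofReal (2 * (r ^ (2*α) / (2*α)))
                  + ENNReal.ofReal a * ENNReal.ofReal ((2/r) ^ (1/q)))
                = ENNReal.ofReal (x * (x * (2 * (r ^ (2*α) / (2*α))) + a * ((2/r) ^ (1/q)))) := by
                  rw [← ENNReal.ofReal_mul hx.le, ← ENNReal.ofReal_mul ha.le,
                    ← ENNReal.ofReal_add (by positivity) hc2, ← ENNReal.ofReal_mul hx.le]
              _ ≤ ENNReal.ofReal ((1/α + 2) * (a ^ θ * x ^ p)) := by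
                  refine ENNReal.ofReal_le_ofReal ?_
                  have h1q : 1/q = (1-2*α)/2 := by rw [hqdef, one_div_div]
                  rw [h1q]
                  exact real_calc hα0 hα ha hx hrdef
              _ = ENNReal.ofReal (1/α + 2) * (ENNReal.ofReal a ^ θ * ENNReal.ofReal x ^ p) := by
                  rw [ENNReal.ofReal_mul (by positivity), ENNReal.ofReal_mul (by positivity),
                    ENNReal.ofReal_rpow_of_nonneg ha.le hθ0,
                    ENNReal.ofReal_rpow_of_nonneg hx.le hp0.le]
  have hI1 : (∫⁻ u, ∫⁻ v, G1 (u,v) ∂μ ∂μ) ≤ ENNReal.ofReal (1/α + 2) * (A ^ θ * S) := by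
    calc (∫⁻ u, ∫⁻ v, G1 (u,v) ∂μ ∂μ)
        ≤ ∫⁻ u, ENNReal.ofReal (1/α + 2) * (A ^ θ * f u ^ p) ∂μ := lintegral_mono_ae inner_bd
      _ = ENNReal.ofReal (1/α + 2) * ∫⁻ u, A ^ θ * f u ^ p ∂μ :=
          lintegral_const_mul' _ _ ENNReal.ofReal_ne_top
      _ = ENNReal.ofReal (1/α + 2) * (A ^ θ * ∫⁻ u, f u ^ p ∂μ) := by
          rw [lintegral_const_mul' _ _ (ENNReal.rpow_ne_top_of_nonneg hθ0 hAT)]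
  have hAS : A ^ θ * S = S ^ (1+2*α) := by
    rw [hAdef, ← ENNReal.rpow_mul]
    calc S ^ (1/p * θ) * S = S ^ (1/p * θ) * S ^ (1:ℝ) := by rw [ENNReal.rpow_one]
      _ = S ^ (1/p * θ + 1) := (ENNReal.rpow_add _ _ hS0 hST).symm
      _ = S ^ (1+2*α) := by
          congr 1
          rw [hpdef, hθdef]; field_simp; ring
  calc (∫⁻ u, ∫⁻ v, f u * f v * ENNReal.ofReal (|u - v| ^ e) ∂μ ∂μ)
      ≤ 2 * ∫⁻ u, ∫⁻ v, G1 (u,v) ∂μ ∂μ := hsym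
    _ ≤ 2 * (ENNReal.ofReal (1/α + 2) * (A ^ θ * S)) := mul_le_mul_right hI1 _
    _ = ENNReal.ofReal (2/α + 4) * S ^ (1+2*α) := by
        rw [hAS, ← mul_assoc]
        congr 1
        rw [show (2:ℝ≥0∞) = ENNReal.ofReal 2 by simp,
          ← ENNReal.ofReal_mul (by norm_num)]
        congr 1
        field_simp
        ring

end Stmt6Aux

/-- For `G : ℝ → ℒ₂(U,V)` (the Hilbert space `E` of Hilbert–Schmidt
operators) with `‖G‖ ∈ L^{2/(1+2α)}(s,t)` and `|φ(u,v)| ≤ C |u-v|^(2α-1)`,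
`∫_s^t ∫_s^t ⟪G u, G v⟫ φ(u,v) du dv ≤ C' (∫_s^t ‖G u‖^{2/(1+2α)} du)^{1+2α}`
with `C'` depending only on `C` and `α`. -/
theorem stmt6 {E : Type*} [NormedAddCommGroup E] [InnerProductSpace ℝ E]
    (α C : ℝ) (hα0 : 0 < α) (hα : α < 1/2) (hC : 0 < C) :
    ∃ C' : ℝ, 0 < C' ∧
      ∀ (s t : ℝ), s < t → ∀ (G : ℝ → E) (φ : ℝ → ℝ → ℝ),
        AEStronglyMeasurable G (volume.restrict (Set.Ioc s t)) →
        (∀ u v : ℝ, u ≠ v → |φ u v| ≤ C * |u - v| ^ (2*α - 1)) →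
        IntervalIntegrable (fun u => ‖G u‖ ^ (2/(1+2*α))) volume s t →
        (∫ u in s..t, ∫ v in s..t, (inner ℝ (G u) (G v) : ℝ) * φ u v) ≤
          C' * (∫ u in s..t, ‖G u‖ ^ (2/(1+2*α))) ^ (1+2*α) := by
  have h12 : (0:ℝ) < 1 + 2*α := by linarith
  refine ⟨C * (2/α + 4), by positivity, ?_⟩
  intro s t hst G φ hG hφ hInt
  set p := 2/(1+2*α) with hpdef
  have hp0 : 0 < p := by positivity
  simp only [intervalIntegral.integral_of_le hst.le]
  set μ := volume.restrict (Set.Ioc s t) with hμ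
  have hFae : AEMeasurable (fun u => (‖G u‖₊ : ℝ≥0∞)) μ := hG.enorm
  set f : ℝ → ℝ≥0∞ := hFae.mk _ with hfdef
  have hfm : Measurable f := hFae.measurable_mk
  have hfeq : (fun u => (‖G u‖₊ : ℝ≥0∞)) =ᵐ[μ] f := hFae.ae_eq_mk
  have hIint : IntegrableOn (fun u => ‖G u‖ ^ p) (Set.Ioc s t) volume :=
    (intervalIntegrable_iff_integrableOn_Ioc_of_le hst.le).1 hInt
  set I := ∫ u in Set.Ioc s t, ‖G u‖ ^ p with hIdef
  have hI0 : 0 ≤ I :=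
    setIntegral_nonneg measurableSet_Ioc fun u _ => Real.rpow_nonneg (norm_nonneg _) _
  set S := ∫⁻ u, f u ^ p ∂μ with hSdef
  have hSI : S = ENNReal.ofReal I := by
    have h1 : S = ∫⁻ u, (‖G u‖₊ : ℝ≥0∞) ^ p ∂μ := by
      refine lintegral_congr_ae ?_
      filter_upwards [hfeq] with u hu
      rw [hu]
    rw [h1, hIdef, ofReal_integral_eq_lintegral_ofReal hIint
      ((ae_restrict_iff' measurableSet_Ioc).2 (ae_of_all _ fun u _ =>
        Real.rpow_nonneg (norm_nonneg _) _))]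
    refine lintegral_congr fun u => ?_
    rw [← enorm_eq_nnnorm, ← ofReal_norm, ENNReal.ofReal_rpow_of_nonneg (norm_nonneg _) hp0.le]
  have hptA : ∀ u : ℝ, (↑‖∫ v in Set.Ioc s t, (inner ℝ (G u) (G v) : ℝ) * φ u v‖₊ : ℝ≥0∞)
      ≤ ∫⁻ v, ENNReal.ofReal C * ((‖G u‖₊ : ℝ≥0∞) * (‖G v‖₊ : ℝ≥0∞)
          * ENNReal.ofReal (|u - v| ^ (2*α - 1))) ∂μ := by
    intro u
    refine (enorm_integral_le_lintegral_enorm _).trans ?_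
    refine lintegral_mono_ae ?_
    have hne : ∀ᵐ v ∂μ, v ≠ u := by
      rw [ae_iff]
      have h2 : {v : ℝ | ¬ v ≠ u} = {u} := by ext v; simp
      rw [h2]
      exact measure_singleton u
    filter_upwards [hne] with v hvu
    rw [← ofReal_norm]
    have hb : ‖(inner ℝ (G u) (G v) : ℝ) * φ u v‖ ≤ (‖G u‖ * ‖G v‖) * (C * |u - v| ^ (2*α-1)) := by
      rw [Real.norm_eq_abs, abs_mul]
      exact mul_le_mul (abs_real_inner_le_norm _ _) (hφ u v hvu.symm) (abs_nonneg _)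
        (by positivity)
    refine (ENNReal.ofReal_le_ofReal hb).trans (le_of_eq ?_)
    rw [ENNReal.ofReal_mul (mul_nonneg (norm_nonneg _) (norm_nonneg _)),
      ENNReal.ofReal_mul (norm_nonneg _), ENNReal.ofReal_mul hC.le,
      ofReal_norm, ofReal_norm, enorm_eq_nnnorm, enorm_eq_nnnorm]
    ring
  have hmain : (∫⁻ u, ↑‖∫ v in Set.Ioc s t, (inner ℝ (G u) (G v) : ℝ) * φ u v‖₊ ∂μ)
      ≤ ENNReal.ofReal C * (ENNReal.ofReal (2/α + 4) * S ^ (1+2*α)) := by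
    calc (∫⁻ u, ↑‖∫ v in Set.Ioc s t, (inner ℝ (G u) (G v) : ℝ) * φ u v‖₊ ∂μ)
        ≤ ∫⁻ u, ∫⁻ v, ENNReal.ofReal C * ((‖G u‖₊ : ℝ≥0∞) * (‖G v‖₊ : ℝ≥0∞)
            * ENNReal.ofReal (|u - v| ^ (2*α - 1))) ∂μ ∂μ := lintegral_mono hptA
      _ = ∫⁻ u, ∫⁻ v, ENNReal.ofReal C * (f u * f v
            * ENNReal.ofReal (|u - v| ^ (2*α - 1))) ∂μ ∂μ := by
          refine lintegral_congr_ae ?_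
          filter_upwards [hfeq] with u hu
          refine lintegral_congr_ae ?_
          filter_upwards [hfeq] with v hv
          rw [hu, hv]
      _ = ENNReal.ofReal C * ∫⁻ u, ∫⁻ v, (f u * f v
            * ENNReal.ofReal (|u - v| ^ (2*α - 1))) ∂μ ∂μ := by
          rw [← lintegral_const_mul' _ _ ENNReal.ofReal_ne_top]
          exact lintegral_congr fun u => lintegral_const_mul' _ _ ENNReal.ofReal_ne_top
      _ ≤ ENNReal.ofReal C * (ENNReal.ofReal (2/α + 4) * S ^ (1+2*α)) :=
          mul_le_mul_right (core hα0 hα s t f hfm) _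
  have hBval : ENNReal.ofReal C * (ENNReal.ofReal (2/α + 4) * S ^ (1+2*α))
      = ENNReal.ofReal (C * ((2/α + 4) * I ^ (1+2*α))) := by
    rw [hSI, ENNReal.ofReal_rpow_of_nonneg hI0 (by linarith),
      ← ENNReal.ofReal_mul (by positivity), ← ENNReal.ofReal_mul hC.le]
  calc (∫ u in Set.Ioc s t, ∫ v in Set.Ioc s t, (inner ℝ (G u) (G v) : ℝ) * φ u v)
      ≤ ‖∫ u in Set.Ioc s t, ∫ v in Set.Ioc s t, (inner ℝ (G u) (G v) : ℝ) * φ u v‖ := by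
        rw [Real.norm_eq_abs]; exact le_abs_self _
    _ = (↑‖∫ u in Set.Ioc s t, ∫ v in Set.Ioc s t,
          (inner ℝ (G u) (G v) : ℝ) * φ u v‖₊ : ℝ≥0∞).toReal := by
        simp
    _ ≤ (ENNReal.ofReal C * (ENNReal.ofReal (2/α + 4) * S ^ (1+2*α))).toReal := by
        refine ENNReal.toReal_mono (by rw [hBval]; exact ENNReal.ofReal_ne_top) ?_
        exact le_trans (enorm_integral_le_lintegral_enorm _) hmain
    _ = C * ((2/α + 4) * I ^ (1+2*α)) := by
        rw [hBval, ENNReal.toReal_ofReal (by positivity)]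
    _ = C * (2/α + 4) * I ^ (1+2*α) := by ring
end

section
/- For H ∈ (1/2, 1) and β > 1/2, the integral J(β, H) = ∫_0^∞ ∫_0^∞ (∫_0^∞ (u+ξ+1)^{−β} (v+ξ+1)^{−β} dξ) |u−v|^{2H−2} du dv is finite if and only if β > H + 1/2. -/
open MeasureTheory Real Set
open scoped ENNReal

lemma lint_shift_Ioi (f : ℝ → ℝ≥0∞) (hf : Measurable f) (c b : ℝ) :
    ∫⁻ x in Ioi b, f (x + c) = ∫⁻ y in Ioi (b + c), f y := by
  have h := (measurePreserving_add_right volume c).setLIntegral_comp_preimage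
    (measurableSet_Ioi (a := b + c)) hf
  rwa [preimage_add_const_Ioi, add_sub_cancel_right] at h

lemma lint_shift_Ioo (f : ℝ → ℝ≥0∞) (hf : Measurable f) (c a b : ℝ) :
    ∫⁻ x in Ioo a b, f (x + c) = ∫⁻ y in Ioo (a + c) (b + c), f y := by
  have h := (measurePreserving_add_right volume c).setLIntegral_comp_preimage
    (measurableSet_Ioo (a := a + c) (b := b + c)) hf
  rwa [preimage_add_const_Ioo, add_sub_cancel_right, add_sub_cancel_right] at h

lemma lint_reflect_Ioo (f : ℝ → ℝ≥0∞) (hf : Measurable f) (c a b : ℝ) :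
    ∫⁻ x in Ioo a b, f (c - x) = ∫⁻ y in Ioo (c - b) (c - a), f y := by
  have h := (Measure.measurePreserving_sub_left volume c).setLIntegral_comp_preimage
    (measurableSet_Ioo (a := c - b) (b := c - a)) hf
  rwa [preimage_const_sub_Ioo, sub_sub_cancel, sub_sub_cancel] at h

lemma lint_rpow_Ioi {p c : ℝ} (hp : p < -1) (hc : 0 < c) :
    ∫⁻ x in Ioi c, ENNReal.ofReal (x ^ p) = ENNReal.ofReal (c ^ (p + 1) / (-(p + 1))) := by
  rw [← ofReal_integral_eq_lintegral_ofReal (integrableOn_Ioi_rpow_of_lt hp hc) ?_]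
  · rw [integral_Ioi_rpow_of_lt hp hc]
    congr 1
    rw [neg_div, div_neg]
  · filter_upwards [ae_restrict_mem measurableSet_Ioi] with x hx
    exact rpow_nonneg (hc.trans hx).le p

lemma lint_rpow_Ioc {p c : ℝ} (hp : -1 < p) (hc : 0 < c) :
    ∫⁻ x in Ioc 0 c, ENNReal.ofReal (x ^ p) = ENNReal.ofReal (c ^ (p + 1) / (p + 1)) := by
  have hint : IntegrableOn (fun x : ℝ => x ^ p) (Ioc 0 c) :=
    (intervalIntegral.intervalIntegrable_rpow' hp (a := 0) (b := c)).1
  rw [← ofReal_integral_eq_lintegral_ofReal hint ?_]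
  · congr 1
    rw [← intervalIntegral.integral_of_le hc.le, integral_rpow (Or.inl hp),
      Real.zero_rpow (by linarith), sub_zero]
  · filter_upwards [ae_restrict_mem measurableSet_Ioc] with x hx
    exact rpow_nonneg hx.1.le p

lemma lint_rpow_Ioo {p c : ℝ} (hp : -1 < p) (hc : 0 < c) :
    ∫⁻ x in Ioo 0 c, ENNReal.ofReal (x ^ p) = ENNReal.ofReal (c ^ (p + 1) / (p + 1)) := by
  rw [setLIntegral_congr Ioo_ae_eq_Ioc, lint_rpow_Ioc hp hc]

lemma half_rpow {a : ℝ} (ha : 0 ≤ a) (p : ℝ) : (a/2)^p = 2^(-p) * a^p := by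
  rw [Real.div_rpow ha (by norm_num), div_eq_mul_inv,
    ← Real.rpow_neg (by norm_num : (0:ℝ) ≤ 2), mul_comm]

lemma step1 {β g u v : ℝ} (hβ : 1/2 < β) (hg0 : 0 < g) (hgβ : g ≤ β - 1/2)
    (hu : 0 < u) (hv : 0 < v) :
    (∫⁻ ξ in Ioi (0:ℝ), ENNReal.ofReal ((u + ξ + 1) ^ (-β) * (v + ξ + 1) ^ (-β))) ≤
    ENNReal.ofReal ((1/(2*β-1)) * ((u+1)^(-g) * (v+1)^(-g))) := by
  set m : ℝ := Real.sqrt ((u+1)*(v+1)) with hm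
  have hm0 : 0 < m := Real.sqrt_pos.mpr (by positivity)
  have hmm : m * m = (u+1)*(v+1) := Real.mul_self_sqrt (by positivity)
  have h2m : 2*m ≤ (u+1) + (v+1) := by
    have h1 : (u+1)*(v+1) ≤ (((u+1)+(v+1))/2)^2 := by nlinarith [sq_nonneg ((u+1)-(v+1))]
    have h2 := Real.sqrt_le_sqrt h1
    rw [Real.sqrt_sq (by positivity)] at h2
    rw [← hm] at h2
    linarith
  have pt : ∀ ξ ∈ Ioi (0:ℝ),
      ENNReal.ofReal ((u + ξ + 1) ^ (-β) * (v + ξ + 1) ^ (-β)) ≤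
      ENNReal.ofReal ((ξ + m) ^ (-(2*β))) := by
    intro ξ hξ
    rw [mem_Ioi] at hξ
    apply ENNReal.ofReal_le_ofReal
    have hsq : (ξ + m) * (ξ + m) ≤ (u + ξ + 1) * (v + ξ + 1) := by nlinarith
    calc (u + ξ + 1) ^ (-β) * (v + ξ + 1) ^ (-β)
        = ((u + ξ + 1) * (v + ξ + 1)) ^ (-β) :=
          (Real.mul_rpow (by linarith) (by linarith)).symm
      _ ≤ ((ξ + m) * (ξ + m)) ^ (-β) :=
          Real.rpow_le_rpow_of_nonpos (by positivity) hsq (by linarith)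
      _ = (ξ + m) ^ (-(2*β)) := by
          rw [Real.mul_rpow (by positivity) (by positivity), ← Real.rpow_add (by positivity)]
          congr 1; ring
  calc (∫⁻ ξ in Ioi (0:ℝ), ENNReal.ofReal ((u + ξ + 1) ^ (-β) * (v + ξ + 1) ^ (-β)))
      ≤ ∫⁻ ξ in Ioi (0:ℝ), ENNReal.ofReal ((ξ + m) ^ (-(2*β))) :=
        setLIntegral_mono' measurableSet_Ioi pt
    _ = ∫⁻ x in Ioi m, ENNReal.ofReal (x ^ (-(2*β))) := by
        rw [lint_shift_Ioi (fun x => ENNReal.ofReal (x ^ (-(2*β)))) (by fun_prop) m 0,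
          zero_add]
    _ = ENNReal.ofReal (m ^ (-(2*β)+1) / (2*β-1)) := by
        rw [lint_rpow_Ioi (by linarith) hm0]
        congr 2
        ring
    _ ≤ ENNReal.ofReal ((1/(2*β-1)) * ((u+1)^(-g) * (v+1)^(-g))) := by
        apply ENNReal.ofReal_le_ofReal
        have h2β : (0:ℝ) < 2*β-1 := by linarith
        have hP : (0:ℝ) ≤ (u+1)*(v+1) := by positivity
        have hmr : m = ((u+1)*(v+1)) ^ ((1:ℝ)/2) := by
          rw [hm, Real.sqrt_eq_rpow]
        have e3 : m ^ (-(2*β)+1) =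
            (u+1)^((1:ℝ)/2*(-(2*β)+1)) * (v+1)^((1:ℝ)/2*(-(2*β)+1)) := by
          rw [hmr, ← Real.rpow_mul hP, Real.mul_rpow (by linarith) (by linarith)]
        have b1 : (u+1)^((1:ℝ)/2*(-(2*β)+1)) ≤ (u+1)^(-g) :=
          Real.rpow_le_rpow_of_exponent_le (by linarith) (by linarith)
        have b2 : (v+1)^((1:ℝ)/2*(-(2*β)+1)) ≤ (v+1)^(-g) :=
          Real.rpow_le_rpow_of_exponent_le (by linarith) (by linarith)
        have hmul : (u+1)^((1:ℝ)/2*(-(2*β)+1)) * (v+1)^((1:ℝ)/2*(-(2*β)+1)) ≤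
            (u+1)^(-g) * (v+1)^(-g) :=
          mul_le_mul b1 b2 (Real.rpow_nonneg (by linarith) _) (Real.rpow_nonneg (by linarith) _)
        rw [e3]
        calc ((u+1)^((1:ℝ)/2*(-(2*β)+1)) * (v+1)^((1:ℝ)/2*(-(2*β)+1))) / (2*β-1)
            ≤ ((u+1)^(-g) * (v+1)^(-g)) / (2*β-1) := by gcongr
          _ = 1/(2*β-1) * ((u+1)^(-g) * (v+1)^(-g)) := by ring


lemma step2 {H g a : ℝ} (hH1 : 1/2 < H) (hH2 : H < 1) (hgH : H < g) (hg1 : g < 1)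
    (ha : 0 < a) :
    ∫⁻ w in Ioi (1:ℝ), ENNReal.ofReal (w^(-g) * |a - w|^(2*H-2)) ≤
    ENNReal.ofReal ((2^(g+1-2*H)/(1-g) + 2^g*(2^(1-2*H)+1)/(2*H-1) + 2^(1-g)/(g+1-2*H))
      * a^(2*H-1-g)) := by
  have hg0 : 0 < g := by linarith
  have h2H1 : 0 < 2*H-1 := by linarith
  have hgp : 0 < g+1-2*H := by linarith
  have h1g : 0 < 1-g := by linarith
  have ha2 : 0 < a/2 := by linarith
  set F : ℝ → ℝ≥0∞ := fun w => ENNReal.ofReal (w^(-g) * |a - w|^(2*H-2)) with hF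
  set G : ℝ → ℝ≥0∞ := fun t => ENNReal.ofReal (|t|^(2*H-2)) with hG
  have hGmeas : Measurable G := by rw [hG]; fun_prop
  have cover : Ioi (1:ℝ) ⊆ (Ioc 0 (a/2) ∪ (Ioo (a/2) (2*a) ∪ Ici (2*a))) := by
    intro x hx
    rw [mem_Ioi] at hx
    rcases le_or_gt x (a/2) with h|h
    · exact Or.inl ⟨by linarith, h⟩
    · rcases lt_or_ge x (2*a) with h'|h'
      · exact Or.inr (Or.inl ⟨h, h'⟩)
      · exact Or.inr (Or.inr h')
  have T1 : ∫⁻ w in Ioc 0 (a/2), F w ≤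
      ENNReal.ofReal (2^(g+1-2*H)/(1-g) * a^(2*H-1-g)) := by
    have pt1 : ∀ w ∈ Ioc (0:ℝ) (a/2), F w ≤
        ENNReal.ofReal ((a/2)^(2*H-2)) * ENNReal.ofReal (w^(-g)) := by
      intro w hw
      obtain ⟨hw0, hwa⟩ := hw
      rw [hF]
      dsimp only
      rw [← ENNReal.ofReal_mul (Real.rpow_nonneg ha2.le _)]
      apply ENNReal.ofReal_le_ofReal
      have habs : |a - w| = a - w := abs_of_pos (by linarith)
      have hle : (a-w)^(2*H-2) ≤ (a/2)^(2*H-2) :=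
        Real.rpow_le_rpow_of_nonpos ha2 (by linarith) (by linarith)
      rw [habs]
      calc w^(-g) * (a-w)^(2*H-2)
          ≤ w^(-g) * (a/2)^(2*H-2) :=
            mul_le_mul_of_nonneg_left hle (Real.rpow_nonneg hw0.le _)
        _ = (a/2)^(2*H-2) * w^(-g) := mul_comm _ _
    calc ∫⁻ w in Ioc 0 (a/2), F w
        ≤ ∫⁻ w in Ioc 0 (a/2),
            ENNReal.ofReal ((a/2)^(2*H-2)) * ENNReal.ofReal (w^(-g)) :=
          setLIntegral_mono' measurableSet_Ioc pt1
      _ = ENNReal.ofReal ((a/2)^(2*H-2)) * ∫⁻ w in Ioc 0 (a/2), ENNReal.ofReal (w^(-g)) :=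
          lintegral_const_mul' _ _ ENNReal.ofReal_ne_top
      _ = ENNReal.ofReal ((a/2)^(2*H-2)) * ENNReal.ofReal ((a/2)^(-g+1)/(-g+1)) := by
          rw [lint_rpow_Ioc (by linarith) ha2]
      _ = ENNReal.ofReal ((a/2)^(2*H-2) * ((a/2)^(-g+1)/(-g+1))) :=
          (ENNReal.ofReal_mul (Real.rpow_nonneg ha2.le _)).symm
      _ ≤ ENNReal.ofReal (2^(g+1-2*H)/(1-g) * a^(2*H-1-g)) := by
          apply ENNReal.ofReal_le_ofReal
          apply le_of_eq
          have e1 : (a/2)^(2*H-2) * (a/2)^(-g+1) = (a/2)^(2*H-1-g) := by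
            rw [← Real.rpow_add ha2]; congr 1; ring
          have e2 : (a/2)^(2*H-1-g) = 2^(-(2*H-1-g)) * a^(2*H-1-g) := half_rpow ha.le _
          calc (a/2)^(2*H-2) * ((a/2)^(-g+1)/(-g+1))
              = ((a/2)^(2*H-2) * (a/2)^(-g+1))/(-g+1) := by ring
            _ = (2^(-(2*H-1-g)) * a^(2*H-1-g))/(-g+1) := by rw [e1, e2]
            _ = 2^(g+1-2*H)/(1-g) * a^(2*H-1-g) := by
                rw [show -(2*H-1-g) = g+1-2*H by ring]; ring
  have T2a : ∫⁻ w in Ioo (a/2) a, G (a - w) = ENNReal.ofReal ((a/2)^(2*H-1)/(2*H-1)) := by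
    rw [lint_reflect_Ioo G hGmeas a (a/2) a, sub_self, show a - a/2 = a/2 by ring]
    rw [setLIntegral_congr_fun measurableSet_Ioo
      (fun t ht => show G t = ENNReal.ofReal (t^(2*H-2)) by
        rw [hG]; dsimp only; rw [abs_of_pos ht.1])]
    rw [lint_rpow_Ioo (by linarith) ha2, show 2*H-2+1 = 2*H-1 by ring]
  have T2b : ∫⁻ w in Ico a (2*a), G (a - w) = ENNReal.ofReal (a^(2*H-1)/(2*H-1)) := by
    rw [← setLIntegral_congr (Ioo_ae_eq_Ico (a := a) (b := 2*a))]
    rw [setLIntegral_congr_fun measurableSet_Ioo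
      (fun w (hw : w ∈ Ioo a (2*a)) => show G (a - w) = G (w + -a) by
        rw [hG]; dsimp only; rw [abs_sub_comm, show w - a = w + -a by ring])]
    rw [lint_shift_Ioo G hGmeas (-a) a (2*a), add_neg_cancel, show 2*a + -a = a by ring]
    rw [setLIntegral_congr_fun measurableSet_Ioo
      (fun t ht => show G t = ENNReal.ofReal (t^(2*H-2)) by
        rw [hG]; dsimp only; rw [abs_of_pos ht.1])]
    rw [lint_rpow_Ioo (by linarith) ha, show 2*H-2+1 = 2*H-1 by ring]
  have T2 : ∫⁻ w in Ioo (a/2) (2*a), F w ≤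
      ENNReal.ofReal (2^g*(2^(1-2*H)+1)/(2*H-1) * a^(2*H-1-g)) := by
    have pt2 : ∀ w ∈ Ioo (a/2) (2*a), F w ≤
        ENNReal.ofReal ((a/2)^(-g)) * G (a - w) := by
      intro w hw
      obtain ⟨hw1, hw2⟩ := hw
      rw [hF, hG]
      dsimp only
      rw [← ENNReal.ofReal_mul (Real.rpow_nonneg ha2.le _)]
      apply ENNReal.ofReal_le_ofReal
      exact mul_le_mul_of_nonneg_right
        (Real.rpow_le_rpow_of_nonpos ha2 hw1.le (by linarith))
        (Real.rpow_nonneg (abs_nonneg _) _)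
    have hsplit : Ioo (a/2) (2*a) ⊆ Ioo (a/2) a ∪ Ico a (2*a) := by
      intro x hx
      rcases lt_or_ge x a with h|h
      · exact Or.inl ⟨hx.1, h⟩
      · exact Or.inr ⟨h, hx.2⟩
    calc ∫⁻ w in Ioo (a/2) (2*a), F w
        ≤ ∫⁻ w in Ioo (a/2) (2*a), ENNReal.ofReal ((a/2)^(-g)) * G (a - w) :=
          setLIntegral_mono' measurableSet_Ioo pt2
      _ = ENNReal.ofReal ((a/2)^(-g)) * ∫⁻ w in Ioo (a/2) (2*a), G (a - w) :=
          lintegral_const_mul' _ _ ENNReal.ofReal_ne_top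
      _ ≤ ENNReal.ofReal ((a/2)^(-g)) *
          ((∫⁻ w in Ioo (a/2) a, G (a - w)) + ∫⁻ w in Ico a (2*a), G (a - w)) :=
          mul_le_mul_right (le_trans (lintegral_mono_set hsplit)
            (lintegral_union_le _ _ _)) _
      _ = ENNReal.ofReal ((a/2)^(-g)) *
          (ENNReal.ofReal ((a/2)^(2*H-1)/(2*H-1)) + ENNReal.ofReal (a^(2*H-1)/(2*H-1))) := by
          rw [T2a, T2b]
      _ = ENNReal.ofReal ((a/2)^(-g) * ((a/2)^(2*H-1)/(2*H-1) + a^(2*H-1)/(2*H-1))) := by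
          rw [← ENNReal.ofReal_add (by positivity) (by positivity),
            ← ENNReal.ofReal_mul (Real.rpow_nonneg ha2.le _)]
      _ ≤ ENNReal.ofReal (2^g*(2^(1-2*H)+1)/(2*H-1) * a^(2*H-1-g)) := by
          apply ENNReal.ofReal_le_ofReal
          apply le_of_eq
          have ea : a^(-g) * a^(2*H-1) = a^(2*H-1-g) := by
            rw [← Real.rpow_add ha]; congr 1; ring
          rw [half_rpow ha.le (-g), half_rpow ha.le (2*H-1),
            show -(-g) = g by ring, show -(2*H-1) = 1-2*H by ring, ← ea]
          ring
  have T3 : ∫⁻ w in Ici (2*a), F w ≤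
      ENNReal.ofReal (2^(1-g)/(g+1-2*H) * a^(2*H-1-g)) := by
    have heq : ∫⁻ w in Ici (2*a), F w = ∫⁻ w in Ioi (2*a), F w :=
      (setLIntegral_congr (Ioi_ae_eq_Ici (a := 2*a))).symm
    rw [heq]
    have pt3 : ∀ w ∈ Ioi (2*a), F w ≤
        ENNReal.ofReal (2^(2-2*H)) * ENNReal.ofReal (w^(2*H-2-g)) := by
      intro w hw
      rw [mem_Ioi] at hw
      have hw0 : 0 < w := by linarith
      rw [hF]
      dsimp only
      rw [← ENNReal.ofReal_mul (by positivity)]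
      apply ENNReal.ofReal_le_ofReal
      have habs : |a - w| = w - a := by
        rw [abs_sub_comm]; exact abs_of_pos (by linarith)
      have h1 : (w - a)^(2*H-2) ≤ (w/2)^(2*H-2) :=
        Real.rpow_le_rpow_of_nonpos (by linarith) (by linarith) (by linarith)
      have h2 : (w/2)^(2*H-2) = 2^(2-2*H) * w^(2*H-2) := by
        rw [half_rpow hw0.le, show -(2*H-2) = 2-2*H by ring]
      calc w^(-g) * |a-w|^(2*H-2)
          = w^(-g) * (w-a)^(2*H-2) := by rw [habs]
        _ ≤ w^(-g) * (w/2)^(2*H-2) :=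
            mul_le_mul_of_nonneg_left h1 (Real.rpow_nonneg hw0.le _)
        _ = 2^(2-2*H) * (w^(-g) * w^(2*H-2)) := by rw [h2]; ring
        _ = 2^(2-2*H) * w^(2*H-2-g) := by
            rw [← Real.rpow_add hw0, show -g+(2*H-2) = 2*H-2-g by ring]
    calc ∫⁻ w in Ioi (2*a), F w
        ≤ ∫⁻ w in Ioi (2*a), ENNReal.ofReal (2^(2-2*H)) * ENNReal.ofReal (w^(2*H-2-g)) :=
          setLIntegral_mono' measurableSet_Ioi pt3
      _ = ENNReal.ofReal (2^(2-2*H)) * ∫⁻ w in Ioi (2*a), ENNReal.ofReal (w^(2*H-2-g)) :=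
          lintegral_const_mul' _ _ ENNReal.ofReal_ne_top
      _ = ENNReal.ofReal (2^(2-2*H)) *
          ENNReal.ofReal ((2*a)^(2*H-2-g+1)/(-(2*H-2-g+1))) := by
          rw [lint_rpow_Ioi (by linarith) (by linarith)]
      _ ≤ ENNReal.ofReal (2^(1-g)/(g+1-2*H) * a^(2*H-1-g)) := by
          rw [← ENNReal.ofReal_mul (by positivity)]
          apply ENNReal.ofReal_le_ofReal
          apply le_of_eq
          rw [show 2*H-2-g+1 = 2*H-1-g by ring, show -(2*H-1-g) = g+1-2*H by ring]
          rw [Real.mul_rpow (by norm_num) ha.le]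
          have e2 : (2:ℝ)^(2-2*H) * 2^(2*H-1-g) = 2^(1-g) := by
            rw [← Real.rpow_add (by norm_num)]; congr 1; ring
          calc (2:ℝ)^(2-2*H) * (2^(2*H-1-g) * a^(2*H-1-g)/(g+1-2*H))
              = (2^(2-2*H) * 2^(2*H-1-g)) * a^(2*H-1-g)/(g+1-2*H) := by ring
            _ = 2^(1-g) * a^(2*H-1-g)/(g+1-2*H) := by rw [e2]
            _ = 2^(1-g)/(g+1-2*H) * a^(2*H-1-g) := by ring
  calc ∫⁻ w in Ioi (1:ℝ), F w
      ≤ ∫⁻ w in (Ioc 0 (a/2) ∪ (Ioo (a/2) (2*a) ∪ Ici (2*a))), F w :=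
        lintegral_mono_set cover
    _ ≤ (∫⁻ w in Ioc 0 (a/2), F w) + ∫⁻ w in (Ioo (a/2) (2*a) ∪ Ici (2*a)), F w :=
        lintegral_union_le _ _ _
    _ ≤ (∫⁻ w in Ioc 0 (a/2), F w) +
        ((∫⁻ w in Ioo (a/2) (2*a), F w) + ∫⁻ w in Ici (2*a), F w) :=
        add_le_add_right (lintegral_union_le _ _ _) _
    _ ≤ ENNReal.ofReal (2^(g+1-2*H)/(1-g) * a^(2*H-1-g)) +
        (ENNReal.ofReal (2^g*(2^(1-2*H)+1)/(2*H-1) * a^(2*H-1-g)) +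
         ENNReal.ofReal (2^(1-g)/(g+1-2*H) * a^(2*H-1-g))) :=
        add_le_add T1 (add_le_add T2 T3)
    _ = ENNReal.ofReal ((2^(g+1-2*H)/(1-g) + 2^g*(2^(1-2*H)+1)/(2*H-1) + 2^(1-g)/(g+1-2*H))
          * a^(2*H-1-g)) := by
        rw [← ENNReal.ofReal_add (by positivity) (by positivity),
          ← ENNReal.ofReal_add (by positivity) (by positivity)]
        congr 1
        ring

lemma lint_rpow_Ioi_top {p : ℝ} (hp : -1 ≤ p) :
    ∫⁻ x in Ioi (1:ℝ), ENNReal.ofReal (x ^ p) = ⊤ := by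
  by_contra h
  have hmeas : Measurable fun x : ℝ => x ^ p := by fun_prop
  have hint : IntegrableOn (fun x : ℝ => x ^ p) (Ioi 1) := by
    refine ⟨hmeas.aestronglyMeasurable, ?_⟩
    rw [hasFiniteIntegral_iff_ofReal ?_]
    · exact lt_top_iff_ne_top.2 h
    · filter_upwards [ae_restrict_mem measurableSet_Ioi] with x hx
      exact rpow_nonneg (by linarith [mem_Ioi.1 hx]) p
  rw [integrableOn_Ioi_rpow_iff zero_lt_one] at hint
  linarith

lemma stmt13_div (H β : ℝ) (hH1 : 1/2 < H) (hH2 : H < 1) (hβ : 1/2 < β) (hle : β ≤ H + 1/2) :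
    (∫⁻ u in Ioi (0:ℝ), ∫⁻ v in Ioi (0:ℝ),
        (∫⁻ ξ in Ioi (0:ℝ),
          ENNReal.ofReal ((u + ξ + 1) ^ (-β) * (v + ξ + 1) ^ (-β))) *
        ENNReal.ofReal (|u - v| ^ (2*H - 2))) = ⊤ := by
  rw [eq_top_iff]
  set C : ℝ := (4:ℝ)^(-(2*β)+1)/(2*β-1) with hC
  have hCpos : 0 < C := by
    apply div_pos (Real.rpow_pos_of_pos (by norm_num) _) (by linarith)
  have key : ∀ u ∈ Ioi (1:ℝ), ENNReal.ofReal (C * u^(2*H-2*β)) ≤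
      ∫⁻ v in Ioi (0:ℝ),
        (∫⁻ ξ in Ioi (0:ℝ),
          ENNReal.ofReal ((u + ξ + 1) ^ (-β) * (v + ξ + 1) ^ (-β))) *
        ENNReal.ofReal (|u - v| ^ (2*H - 2)) := by
    intro u hu
    rw [mem_Ioi] at hu
    have hu0 : (0:ℝ) < u := by linarith
    set D : ℝ := (2*u+2)^(-(2*β)+1)/(2*β-1) with hD
    have hDpos : 0 < D := by
      apply div_pos (Real.rpow_pos_of_pos (by linarith) _) (by linarith)
    have h1 : ∀ v ∈ Ioo u (2*u), ENNReal.ofReal (D * u^(2*H-2)) ≤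
        (∫⁻ ξ in Ioi (0:ℝ),
          ENNReal.ofReal ((u + ξ + 1) ^ (-β) * (v + ξ + 1) ^ (-β))) *
        ENNReal.ofReal (|u - v| ^ (2*H - 2)) := by
      intro v hv
      obtain ⟨hv1, hv2⟩ := hv
      have hKa : ENNReal.ofReal D ≤
          ∫⁻ ξ in Ioi (0:ℝ),
            ENNReal.ofReal ((u + ξ + 1) ^ (-β) * (v + ξ + 1) ^ (-β)) := by
        have hpt : ∀ ξ ∈ Ioi (0:ℝ), ENNReal.ofReal ((ξ + (2*u+2))^(-(2*β))) ≤
            ENNReal.ofReal ((u + ξ + 1) ^ (-β) * (v + ξ + 1) ^ (-β)) := by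
          intro ξ hξ
          rw [mem_Ioi] at hξ
          apply ENNReal.ofReal_le_ofReal
          have e1 : (ξ + (2*u+2))^(-(2*β)) =
              (ξ + (2*u+2))^(-β) * (ξ + (2*u+2))^(-β) := by
            rw [← Real.rpow_add (by linarith)]; ring_nf
          rw [e1]
          have b1 : (ξ + (2*u+2))^(-β) ≤ (u + ξ + 1) ^ (-β) :=
            Real.rpow_le_rpow_of_nonpos (by linarith) (by linarith) (by linarith)
          have b2 : (ξ + (2*u+2))^(-β) ≤ (v + ξ + 1) ^ (-β) :=
            Real.rpow_le_rpow_of_nonpos (by linarith) (by linarith) (by linarith)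
          exact mul_le_mul b1 b2 (Real.rpow_nonneg (by linarith) _)
            (Real.rpow_nonneg (by linarith) _)
        calc ENNReal.ofReal D
            = ∫⁻ x in Ioi (2*u+2), ENNReal.ofReal (x^(-(2*β))) := by
              rw [lint_rpow_Ioi (by linarith) (by linarith)]
              congr 1
              rw [hD]; congr 1; ring
          _ = ∫⁻ ξ in Ioi (0:ℝ), ENNReal.ofReal ((ξ + (2*u+2))^(-(2*β))) := by
              rw [lint_shift_Ioi (fun x => ENNReal.ofReal (x^(-(2*β)))) (by fun_prop)
                (2*u+2) 0, zero_add]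
          _ ≤ _ := setLIntegral_mono' measurableSet_Ioi hpt
      have hAb : ENNReal.ofReal (u^(2*H-2)) ≤ ENNReal.ofReal (|u - v| ^ (2*H - 2)) := by
        apply ENNReal.ofReal_le_ofReal
        have : |u - v| = v - u := by rw [abs_sub_comm]; exact abs_of_pos (by linarith)
        rw [this]
        exact Real.rpow_le_rpow_of_nonpos (by linarith) (by linarith) (by linarith)
      calc ENNReal.ofReal (D * u^(2*H-2))
          = ENNReal.ofReal D * ENNReal.ofReal (u^(2*H-2)) :=
            ENNReal.ofReal_mul hDpos.le
        _ ≤ _ := mul_le_mul' hKa hAb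
    have h2 : ENNReal.ofReal (D * u^(2*H-2)) * ENNReal.ofReal u ≤
        ∫⁻ v in Ioi (0:ℝ),
          (∫⁻ ξ in Ioi (0:ℝ),
            ENNReal.ofReal ((u + ξ + 1) ^ (-β) * (v + ξ + 1) ^ (-β))) *
          ENNReal.ofReal (|u - v| ^ (2*H - 2)) := by
      refine le_trans ?_ (lintegral_mono_set (show Ioo u (2*u) ⊆ Ioi 0 by
        intro x hx; exact lt_trans hu0 hx.1))
      calc ENNReal.ofReal (D * u^(2*H-2)) * ENNReal.ofReal u
          = ENNReal.ofReal (D * u^(2*H-2)) * volume (Ioo u (2*u)) := by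
            rw [Real.volume_Ioo]; congr 1; congr 1; ring
        _ = ∫⁻ _ in Ioo u (2*u), ENNReal.ofReal (D * u^(2*H-2)) :=
            (setLIntegral_const _ _).symm
        _ ≤ _ := setLIntegral_mono' measurableSet_Ioo h1
    refine le_trans ?_ h2
    rw [← ENNReal.ofReal_mul (by positivity)]
    apply ENNReal.ofReal_le_ofReal
    have h48 : (4*u)^(-(2*β)+1) ≤ (2*u+2)^(-(2*β)+1) :=
      Real.rpow_le_rpow_of_nonpos (by linarith) (by linarith) (by linarith)
    have e1 : C * u^(2*H-2*β) = (4*u)^(-(2*β)+1) * u^(2*H-1) / (2*β-1) := by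
      rw [Real.mul_rpow (by norm_num) hu0.le, mul_assoc, ← Real.rpow_add hu0]
      have : -(2*β)+1+(2*H-1) = 2*H-2*β := by ring
      rw [this, hC]; ring
    have e2 : D * u^(2*H-2) * u = (2*u+2)^(-(2*β)+1) * u^(2*H-1) / (2*β-1) := by
      rw [mul_assoc, ← Real.rpow_add_one hu0.ne' (2*H-2)]
      have : 2*H-2+1 = 2*H-1 := by ring
      rw [this, hD]; ring
    rw [e1, e2]
    have hc2 : (0:ℝ) < 2*β-1 := by linarith
    have hr : (0:ℝ) ≤ u^(2*H-1) := Real.rpow_nonneg hu0.le _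
    gcongr
  calc (⊤:ℝ≥0∞)
      = ENNReal.ofReal C * ∫⁻ u in Ioi (1:ℝ),
          ENNReal.ofReal (u^(2*H-2*β)) := by
        rw [lint_rpow_Ioi_top (by linarith), ENNReal.mul_top
          ((ENNReal.ofReal_pos.mpr hCpos).ne')]
    _ = ∫⁻ u in Ioi (1:ℝ), ENNReal.ofReal C * ENNReal.ofReal (u^(2*H-2*β)) :=
        (lintegral_const_mul' _ _ ENNReal.ofReal_ne_top).symm
    _ = ∫⁻ u in Ioi (1:ℝ), ENNReal.ofReal (C * u^(2*H-2*β)) := by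
        congr 1; funext u
        rw [← ENNReal.ofReal_mul hCpos.le]
    _ ≤ ∫⁻ u in Ioi (1:ℝ), _ := setLIntegral_mono' measurableSet_Ioi key
    _ ≤ _ := lintegral_mono_set (Ioi_subset_Ioi zero_le_one)

lemma stmt13_fin (H β : ℝ) (hH1 : 1/2 < H) (hH2 : H < 1) (hβ : 1/2 < β)
    (hgt : H + 1/2 < β) :
    (∫⁻ u in Ioi (0:ℝ), ∫⁻ v in Ioi (0:ℝ),
        (∫⁻ ξ in Ioi (0:ℝ),
          ENNReal.ofReal ((u + ξ + 1) ^ (-β) * (v + ξ + 1) ^ (-β))) *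
        ENNReal.ofReal (|u - v| ^ (2*H - 2))) ≠ ⊤ := by
  set g : ℝ := min (β - 1/2) ((1+H)/2) with hgdef
  have hgH : H < g := lt_min (by linarith) (by linarith)
  have hg1 : g < 1 := lt_of_le_of_lt (min_le_right _ _) (by linarith)
  have hgβ : g ≤ β - 1/2 := min_le_left _ _
  have hg0 : 0 < g := by linarith
  have h2H1 : 0 < 2*H-1 := by linarith
  have hgp : 0 < g+1-2*H := by linarith
  have h1g : 0 < 1-g := by linarith
  have h2β : 0 < 2*β-1 := by linarith
  set C1 : ℝ := 1/(2*β-1) with hC1def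
  have hC1 : 0 < C1 := by positivity
  set C2 : ℝ := 2^(g+1-2*H)/(1-g) + 2^g*(2^(1-2*H)+1)/(2*H-1) + 2^(1-g)/(g+1-2*H)
    with hC2def
  have hC2 : 0 < C2 := by
    have p1 : (0:ℝ) < 2^(g+1-2*H)/(1-g) :=
      div_pos (Real.rpow_pos_of_pos (by norm_num) _) h1g
    have p2 : (0:ℝ) < 2^g*(2^(1-2*H)+1)/(2*H-1) := by
      apply div_pos _ h2H1
      have := Real.rpow_pos_of_pos (show (0:ℝ) < 2 by norm_num) g
      have := Real.rpow_pos_of_pos (show (0:ℝ) < 2 by norm_num) (1-2*H)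
      nlinarith
    have p3 : (0:ℝ) < 2^(1-g)/(g+1-2*H) :=
      div_pos (Real.rpow_pos_of_pos (by norm_num) _) hgp
    rw [hC2def]; linarith
  have innerle : ∀ u ∈ Ioi (0:ℝ),
      (∫⁻ v in Ioi (0:ℝ),
        (∫⁻ ξ in Ioi (0:ℝ),
          ENNReal.ofReal ((u + ξ + 1) ^ (-β) * (v + ξ + 1) ^ (-β))) *
        ENNReal.ofReal (|u - v| ^ (2*H - 2))) ≤
      ENNReal.ofReal (C1*(u+1)^(-g)) * ENNReal.ofReal (C2*(u+1)^(2*H-1-g)) := by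
    intro u hu
    rw [mem_Ioi] at hu
    have pt : ∀ v ∈ Ioi (0:ℝ),
        (∫⁻ ξ in Ioi (0:ℝ),
          ENNReal.ofReal ((u + ξ + 1) ^ (-β) * (v + ξ + 1) ^ (-β))) *
        ENNReal.ofReal (|u - v| ^ (2*H - 2)) ≤
        ENNReal.ofReal (C1*(u+1)^(-g)) *
          ((fun w => ENNReal.ofReal (w^(-g) * |(u+1) - w|^(2*H-2))) (v+1)) := by
      intro v hv
      rw [mem_Ioi] at hv
      dsimp only
      calc (∫⁻ ξ in Ioi (0:ℝ),
            ENNReal.ofReal ((u + ξ + 1) ^ (-β) * (v + ξ + 1) ^ (-β))) *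
          ENNReal.ofReal (|u - v| ^ (2*H - 2))
          ≤ ENNReal.ofReal ((1/(2*β-1)) * ((u+1)^(-g) * (v+1)^(-g))) *
            ENNReal.ofReal (|u - v| ^ (2*H - 2)) :=
            mul_le_mul_left (step1 hβ hg0 hgβ hu hv) _
        _ = ENNReal.ofReal (C1*(u+1)^(-g)) *
            ENNReal.ofReal ((v+1)^(-g) * |(u+1) - (v+1)|^(2*H-2)) := by
            rw [← ENNReal.ofReal_mul (by positivity), ← ENNReal.ofReal_mul (by positivity)]
            congr 1
            rw [show (u:ℝ)+1-(v+1) = u - v by ring, hC1def]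
            ring
    calc (∫⁻ v in Ioi (0:ℝ),
          (∫⁻ ξ in Ioi (0:ℝ),
            ENNReal.ofReal ((u + ξ + 1) ^ (-β) * (v + ξ + 1) ^ (-β))) *
          ENNReal.ofReal (|u - v| ^ (2*H - 2)))
        ≤ ∫⁻ v in Ioi (0:ℝ), ENNReal.ofReal (C1*(u+1)^(-g)) *
            ((fun w => ENNReal.ofReal (w^(-g) * |(u+1) - w|^(2*H-2))) (v+1)) :=
          setLIntegral_mono' measurableSet_Ioi pt
      _ = ENNReal.ofReal (C1*(u+1)^(-g)) *
          ∫⁻ v in Ioi (0:ℝ),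
            (fun w => ENNReal.ofReal (w^(-g) * |(u+1) - w|^(2*H-2))) (v+1) :=
          lintegral_const_mul' _ _ ENNReal.ofReal_ne_top
      _ = ENNReal.ofReal (C1*(u+1)^(-g)) *
          ∫⁻ w in Ioi (1:ℝ), ENNReal.ofReal (w^(-g) * |(u+1) - w|^(2*H-2)) := by
          rw [lint_shift_Ioi (fun w => ENNReal.ofReal (w^(-g) * |(u+1) - w|^(2*H-2)))
            (by fun_prop) 1 0, zero_add]
      _ ≤ ENNReal.ofReal (C1*(u+1)^(-g)) * ENNReal.ofReal (C2*(u+1)^(2*H-1-g)) :=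
          mul_le_mul_right (step2 hH1 hH2 hgH hg1 (by linarith)) _
  have main : (∫⁻ u in Ioi (0:ℝ), ∫⁻ v in Ioi (0:ℝ),
      (∫⁻ ξ in Ioi (0:ℝ),
        ENNReal.ofReal ((u + ξ + 1) ^ (-β) * (v + ξ + 1) ^ (-β))) *
      ENNReal.ofReal (|u - v| ^ (2*H - 2))) ≤
      ENNReal.ofReal (C1*C2) * ENNReal.ofReal ((1:ℝ)^(2*H-1-2*g+1)/(-(2*H-1-2*g+1))) := by
    calc (∫⁻ u in Ioi (0:ℝ), ∫⁻ v in Ioi (0:ℝ),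
        (∫⁻ ξ in Ioi (0:ℝ),
          ENNReal.ofReal ((u + ξ + 1) ^ (-β) * (v + ξ + 1) ^ (-β))) *
        ENNReal.ofReal (|u - v| ^ (2*H - 2)))
        ≤ ∫⁻ u in Ioi (0:ℝ),
            ENNReal.ofReal (C1*(u+1)^(-g)) * ENNReal.ofReal (C2*(u+1)^(2*H-1-g)) :=
          setLIntegral_mono' measurableSet_Ioi innerle
      _ = ∫⁻ u in Ioi (0:ℝ),
            (fun w => ENNReal.ofReal (C1*C2) * ENNReal.ofReal (w^(2*H-1-2*g))) (u+1) := by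
          apply setLIntegral_congr_fun measurableSet_Ioi
          intro u hu
          rw [mem_Ioi] at hu
          have hu1 : (0:ℝ) < u+1 := by linarith
          dsimp only
          rw [← ENNReal.ofReal_mul (by positivity), ← ENNReal.ofReal_mul (by positivity)]
          congr 1
          have : (u+1)^(-g) * (u+1)^(2*H-1-g) = (u+1)^(2*H-1-2*g) := by
            rw [← Real.rpow_add hu1]; congr 1; ring
          rw [← this]; ring
      _ = ∫⁻ w in Ioi (1:ℝ), ENNReal.ofReal (C1*C2) * ENNReal.ofReal (w^(2*H-1-2*g)) := by
          rw [lint_shift_Ioi (fun w => ENNReal.ofReal (C1*C2) *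
            ENNReal.ofReal (w^(2*H-1-2*g))) (by fun_prop) 1 0, zero_add]
      _ = ENNReal.ofReal (C1*C2) * ∫⁻ w in Ioi (1:ℝ), ENNReal.ofReal (w^(2*H-1-2*g)) :=
          lintegral_const_mul' _ _ ENNReal.ofReal_ne_top
      _ = ENNReal.ofReal (C1*C2) *
          ENNReal.ofReal ((1:ℝ)^(2*H-1-2*g+1)/(-(2*H-1-2*g+1))) := by
          rw [lint_rpow_Ioi (by linarith) zero_lt_one]
  exact ne_top_of_le_ne_top
    (ENNReal.mul_ne_top ENNReal.ofReal_ne_top ENNReal.ofReal_ne_top) main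

/-- For `H ∈ (1/2,1)` and `β > 1/2`, the (nonnegative) integral
`J(β,H) = ∫_0^∞ ∫_0^∞ (∫_0^∞ (u+ξ+1)^{-β} (v+ξ+1)^{-β} dξ) |u-v|^{2H-2} du dv`
is finite if and only if `β > H + 1/2`. -/
theorem stmt13 (H β : ℝ) (hH1 : 1/2 < H) (hH2 : H < 1) (hβ : 1/2 < β) :
    (∫⁻ u in Ioi (0:ℝ), ∫⁻ v in Ioi (0:ℝ),
        (∫⁻ ξ in Ioi (0:ℝ),
          ENNReal.ofReal ((u + ξ + 1) ^ (-β) * (v + ξ + 1) ^ (-β))) *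
        ENNReal.ofReal (|u - v| ^ (2*H - 2))) ≠ ⊤ ↔
      H + 1/2 < β := by
  constructor
  · intro hne
    by_contra hnot
    push_neg at hnot
    exact hne (stmt13_div H β hH1 hH2 hβ hnot)
  · intro h
    exact stmt13_fin H β hH1 hH2 hβ h
end
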